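/- arXiv:2506.13929 — 3 statements merged into one kernel-verified Lean document; each statement's English description precedes it below -/
import Mathlib

section
/- (Nash equilibria are stationary.) Let Ω ⊆ ℝⁿ be a nonempty measurable set, K an admissible kernel, and ρ a recognition function. Let u : Ω → ℝ be bounded and measurable, and suppose u is a Nash equilibrium: for every x ∈ Ω and every h ∈ ℝ, ∫_Ω K(x,y) ρ(u(x) + h − u(y)) dy ≤ ∫_Ω K(x,y) ρ(u(x) − u(y)) dy. Then u is a stationary solution: ∫_Ω K(x,y) ρ'(u(x) − u(y)) dy = 0 for every x ∈ Ω. -/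
open MeasureTheory Set

lemma taylor_aux (ρ : ℝ → ℝ) (hρ : Differentiable ℝ ρ) (L R a h : ℝ)
    (hL0 : 0 ≤ L)
    (hL : ∀ b c : ℝ, |b| ≤ R → |c| ≤ R → |deriv ρ b - deriv ρ c| ≤ L * |b - c|)
    (ha : |a| + |h| ≤ R) :
    |ρ (a + h) - ρ a - h * deriv ρ a| ≤ L * |h| * |h| := by
  have habs : ∀ t ∈ uIcc (0:ℝ) h, |t| ≤ |h| := by
    intro t ht
    rw [Set.mem_uIcc] at ht
    rcases ht with ⟨h1, h2⟩ | ⟨h1, h2⟩ <;>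
      exact abs_le.mpr ⟨by cases abs_cases h <;> linarith, by cases abs_cases h <;> linarith⟩
  set f : ℝ → ℝ := fun t => ρ (a + t) - t * deriv ρ a with hf
  have hder : ∀ t ∈ uIcc (0:ℝ) h,
      HasDerivWithinAt f (deriv ρ (a + t) - deriv ρ a) (uIcc 0 h) t := by
    intro t ht
    have h1 : HasDerivAt (fun t : ℝ => ρ (a + t)) (deriv ρ (a + t)) t := by
      have := ((hρ (a + t)).hasDerivAt).comp t ((hasDerivAt_id t).const_add a)
      simpa [Function.comp_def] using this
    exact ((h1.sub (hasDerivAt_mul_const (deriv ρ a))).hasDerivWithinAt)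
  have hbound : ∀ t ∈ uIcc (0:ℝ) h, ‖deriv ρ (a + t) - deriv ρ a‖ ≤ L * |h| := by
    intro t ht
    have h1 : |a + t| ≤ R := by
      have := habs t ht
      calc |a + t| ≤ |a| + |t| := abs_add_le a t
        _ ≤ R := by linarith
    have h2 : |a| ≤ R := by have := abs_nonneg h; linarith
    calc ‖deriv ρ (a + t) - deriv ρ a‖ = |deriv ρ (a + t) - deriv ρ a| := rfl
      _ ≤ L * |a + t - a| := hL _ _ h1 h2
      _ = L * |t| := by ring_nf
      _ ≤ L * |h| := mul_le_mul_of_nonneg_left (habs t ht) hL0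
  have key := (convex_uIcc (0:ℝ) h).norm_image_sub_le_of_norm_hasDerivWithin_le
    hder hbound (left_mem_uIcc) (right_mem_uIcc)
  have : ‖f h - f 0‖ ≤ L * |h| * ‖h - (0:ℝ)‖ := by
    simpa using key
  simp only [hf, Real.norm_eq_abs, sub_zero, zero_mul] at this
  calc |ρ (a + h) - ρ a - h * deriv ρ a|
      = |(ρ (a + h) - h * deriv ρ a) - (ρ a - 0)| := by ring_nf
    _ ≤ L * |h| * |h| := by simpa using this

/-- Nash equilibria are stationary: for an admissible kernel `K` and a
recognition function `ρ`, if the bounded measurable strategy profile `u` is a Nash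
equilibrium — no player `x ∈ Ω` can increase their payoff
`∫_Ω K(x,y) ρ(u(x) − u(y)) dy` by shifting their strategy by any `h ∈ ℝ` — then `u` is a
stationary solution: `∫_Ω K(x,y) ρ'(u(x) − u(y)) dy = 0` for every `x ∈ Ω`. -/
theorem statement16
    (n : ℕ) (Ω : Set (EuclideanSpace ℝ (Fin n)))
    (hΩne : Ω.Nonempty) (hΩmeas : MeasurableSet Ω)
    -- `K` is an admissible kernel:
    (K : EuclideanSpace ℝ (Fin n) → EuclideanSpace ℝ (Fin n) → ℝ)
    (hKnonneg : ∀ x y, 0 ≤ K x y)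
    (hKmeas : Measurable (Function.uncurry K))
    (hKint : ∀ x ∈ Ω, IntegrableOn (K x) Ω)
    (hKcont : ∀ x ∈ Ω, ∀ ε > (0:ℝ), ∃ δ > (0:ℝ), ∀ x' ∈ Ω, dist x' x < δ →
        (∫ y in Ω, |K x' y - K x y|) < ε)
    (D : ℝ) (hD : ∀ x ∈ Ω, (∫ y in Ω, K x y) ≤ D)
    -- `ρ` is a recognition function:
    (ρ : ℝ → ℝ) (hρ : Differentiable ℝ ρ)
    (hρ'lip : ∀ R : ℝ, 0 < R → ∃ L : ℝ, ∀ a b : ℝ, |a| ≤ R → |b| ≤ R →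
        |deriv ρ a - deriv ρ b| ≤ L * |a - b|)
    -- `u` bounded and measurable:
    (u : EuclideanSpace ℝ (Fin n) → ℝ)
    (humeas : Measurable u) (M : ℝ) (hubd : ∀ x ∈ Ω, |u x| ≤ M)
    -- `u` is a Nash equilibrium:
    (hNash : ∀ x ∈ Ω, ∀ h : ℝ,
      (∫ y in Ω, K x y * ρ (u x + h - u y)) ≤ ∫ y in Ω, K x y * ρ (u x - u y)) :
    ∀ x ∈ Ω, (∫ y in Ω, K x y * deriv ρ (u x - u y)) = 0 := by
  intro x hx
  have hM0 : 0 ≤ M := le_trans (abs_nonneg _) (hubd x hx)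
  obtain ⟨L₀, hL₀⟩ := hρ'lip (2*M+2) (by linarith)
  set L : ℝ := max L₀ 0 with hLdef
  have hL0 : 0 ≤ L := le_max_right _ _
  have hL : ∀ b c : ℝ, |b| ≤ 2*M+2 → |c| ≤ 2*M+2 →
      |deriv ρ b - deriv ρ c| ≤ L * |b - c| := fun b c hb hc =>
    (hL₀ b c hb hc).trans (mul_le_mul_of_nonneg_right (le_max_left _ _) (abs_nonneg _))
  have hKx : Measurable (K x) := hKmeas.comp measurable_prodMk_left
  have hKintx := hKint x hx
  -- generic integrability
  have int_aux : ∀ (g : EuclideanSpace ℝ (Fin n) → ℝ), Measurable g → ∀ C : ℝ,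
      (∀ y ∈ Ω, |g y| ≤ C) → IntegrableOn (fun y => K x y * g y) Ω := by
    intro g hg C hC
    apply Integrable.mono' (hKintx.const_mul C) ((hKx.mul hg).aestronglyMeasurable)
    filter_upwards [ae_restrict_mem hΩmeas] with y hy
    rw [Real.norm_eq_abs, Pi.mul_apply, abs_mul, abs_of_nonneg (hKnonneg x y)]
    calc K x y * |g y| ≤ K x y * C := mul_le_mul_of_nonneg_left (hC y hy) (hKnonneg x y)
      _ = C * K x y := mul_comm _ _
  -- bound for ρ on the relevant compact
  obtain ⟨Cρ, hCρ⟩ := (isCompact_Icc (a := -(2*M+2)) (b := 2*M+2)).exists_bound_of_continuousOn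
    hρ.continuous.continuousOn
  -- bound for deriv ρ
  have hderbd : ∀ z : ℝ, |z| ≤ 2*M+2 → |deriv ρ z| ≤ |deriv ρ 0| + L * (2*M+2) := by
    intro z hz
    have := hL z 0 hz (by simp; linarith)
    have h2 : |deriv ρ z| - |deriv ρ 0| ≤ |deriv ρ z - deriv ρ 0| := abs_sub_abs_le_abs_sub _ _
    have h3 : L * |z - 0| ≤ L * (2*M+2) := by
      apply mul_le_mul_of_nonneg_left _ hL0
      simpa using hz
    linarith
  -- integrability facts
  have intA : ∀ h : ℝ, |h| ≤ 1 →
      IntegrableOn (fun y => K x y * ρ (u x + h - u y)) Ω := by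
    intro h hh
    apply int_aux _ (hρ.continuous.measurable.comp (measurable_const.sub humeas)) Cρ
    intro y hy
    have h1 := hubd x hx; have h2 := hubd y hy
    have habs : |u x + h - u y| ≤ 2*M+2 := by
      calc |u x + h - u y| ≤ |u x + h| + |u y| := abs_sub _ _
        _ ≤ |u x| + |h| + |u y| := by linarith [abs_add_le (u x) h]
        _ ≤ 2*M+2 := by linarith
    have hmem : u x + h - u y ∈ Icc (-(2*M+2)) (2*M+2) := by
      rcases abs_le.mp habs with ⟨ha, hb⟩; exact ⟨ha, hb⟩
    simpa using hCρ _ hmem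
  have intB : IntegrableOn (fun y => K x y * ρ (u x - u y)) Ω := by
    have := intA 0 (by norm_num)
    simpa using this
  have intC : IntegrableOn (fun y => K x y * deriv ρ (u x - u y)) Ω := by
    apply int_aux _ ((measurable_deriv ρ).comp (measurable_const.sub humeas))
      (|deriv ρ 0| + L * (2*M+2))
    intro y hy
    apply hderbd
    have h1 := hubd x hx; have h2 := hubd y hy
    calc |u x - u y| ≤ |u x| + |u y| := abs_sub _ _
      _ ≤ 2*M+2 := by linarith
  set J : ℝ := ∫ y in Ω, K x y * deriv ρ (u x - u y) with hJdef
  have hDnn : 0 ≤ D :=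
    le_trans (setIntegral_nonneg hΩmeas fun y _ => hKnonneg x y) (hD x hx)
  -- the key inequality
  have key : ∀ h : ℝ, |h| ≤ 1 → h * J ≤ L * |h| * |h| * D := by
    intro h hh
    have hsplit :
        (∫ y in Ω, K x y * (ρ (u x + h - u y) - ρ (u x - u y) - h * deriv ρ (u x - u y)))
        = (∫ y in Ω, K x y * ρ (u x + h - u y)) - (∫ y in Ω, K x y * ρ (u x - u y))
          - h * J := by
      have e : (fun y => K x y * (ρ (u x + h - u y) - ρ (u x - u y) - h * deriv ρ (u x - u y)))
          = fun y => (K x y * ρ (u x + h - u y) - K x y * ρ (u x - u y))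
            - h * (K x y * deriv ρ (u x - u y)) := by
        funext y; ring
      have iAB : IntegrableOn
          (fun y => K x y * ρ (u x + h - u y) - K x y * ρ (u x - u y)) Ω :=
        (intA h hh).sub intB
      have iC : IntegrableOn (fun y => h * (K x y * deriv ρ (u x - u y))) Ω :=
        intC.const_mul h
      rw [e, integral_sub iAB iC, integral_sub (intA h hh) intB, integral_const_mul]
    have hptwise : ∀ y ∈ Ω,
        |K x y * (ρ (u x + h - u y) - ρ (u x - u y) - h * deriv ρ (u x - u y))|
          ≤ (L * |h| * |h|) * K x y := by
      intro y hy
      have h1 := hubd x hx; have h2 := hubd y hy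
      have habs : |u x - u y| + |h| ≤ 2*M+2 := by
        have : |u x - u y| ≤ |u x| + |u y| := abs_sub _ _
        linarith
      have ht := taylor_aux ρ hρ L (2*M+2) (u x - u y) h hL0 hL habs
      have heq : u x - u y + h = u x + h - u y := by ring
      rw [heq] at ht
      rw [abs_mul, abs_of_nonneg (hKnonneg x y)]
      calc K x y * |ρ (u x + h - u y) - ρ (u x - u y) - h * deriv ρ (u x - u y)|
          ≤ K x y * (L * |h| * |h|) := mul_le_mul_of_nonneg_left ht (hKnonneg x y)
        _ = (L * |h| * |h|) * K x y := mul_comm _ _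
    have hEbd :
        |(∫ y in Ω, K x y * (ρ (u x + h - u y) - ρ (u x - u y) - h * deriv ρ (u x - u y)))|
          ≤ L * |h| * |h| * D := by
      have hintE : IntegrableOn
          (fun y => K x y * (ρ (u x + h - u y) - ρ (u x - u y) - h * deriv ρ (u x - u y))) Ω := by
        have e : (fun y => K x y * (ρ (u x + h - u y) - ρ (u x - u y) - h * deriv ρ (u x - u y)))
            = fun y => (K x y * ρ (u x + h - u y) - K x y * ρ (u x - u y))
              - h * (K x y * deriv ρ (u x - u y)) := by
          funext y; ring
        rw [e]
        have iAB : IntegrableOn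
            (fun y => K x y * ρ (u x + h - u y) - K x y * ρ (u x - u y)) Ω :=
          (intA h hh).sub intB
        have iC : IntegrableOn (fun y => h * (K x y * deriv ρ (u x - u y))) Ω :=
          intC.const_mul h
        exact iAB.sub iC
      calc |(∫ y in Ω, K x y * (ρ (u x + h - u y) - ρ (u x - u y) - h * deriv ρ (u x - u y)))|
          ≤ ∫ y in Ω, |K x y * (ρ (u x + h - u y) - ρ (u x - u y) - h * deriv ρ (u x - u y))| :=
            by simpa [Real.norm_eq_abs, abs_mul] using
              norm_integral_le_integral_norm (μ := volume.restrict Ω)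
                (fun y => K x y * (ρ (u x + h - u y) - ρ (u x - u y) - h * deriv ρ (u x - u y)))
        _ ≤ ∫ y in Ω, (L * |h| * |h|) * K x y := by
            apply setIntegral_mono_on hintE.abs (hKintx.const_mul _) hΩmeas hptwise
        _ = (L * |h| * |h|) * ∫ y in Ω, K x y := integral_const_mul _ _
        _ ≤ L * |h| * |h| * D := mul_le_mul_of_nonneg_left (hD x hx) (by positivity)
    have hN := hNash x hx h
    rw [hsplit] at hEbd
    have := abs_le.mp hEbd
    linarith [this.1, this.2]
  -- conclude J = 0
  have hJle : ∀ ε > (0:ℝ), |J| ≤ ε := by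
    intro ε hε
    set C : ℝ := L * D with hCdef
    have hC0 : 0 ≤ C := mul_nonneg hL0 hDnn
    set t : ℝ := min 1 (ε / (C + 1)) with htdef
    have ht0 : 0 < t := lt_min one_pos (div_pos hε (by linarith))
    have ht1 : t ≤ 1 := min_le_left _ _
    have habs_t : |t| = t := abs_of_pos ht0
    have h1 := key t (by rw [habs_t]; exact ht1)
    have h2 := key (-t) (by rw [abs_neg, habs_t]; exact ht1)
    rw [habs_t] at h1
    rw [abs_neg, habs_t] at h2
    -- h1 : t * J ≤ L * t * t * D ; h2 : -t * J ≤ L * t * t * D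
    have hub : J ≤ C * t := by
      have hc : t * J ≤ t * (C * t) := by
        calc t * J ≤ L * t * t * D := h1
          _ = t * (C * t) := by rw [hCdef]; ring
      exact (mul_le_mul_iff_right₀ ht0).mp hc
    have hlb : -(C * t) ≤ J := by
      have hc : t * -J ≤ t * (C * t) := by
        calc t * -J = -t * J := by ring
          _ ≤ L * t * t * D := h2
          _ = t * (C * t) := by rw [hCdef]; ring
      have := (mul_le_mul_iff_right₀ ht0).mp hc
      linarith
    have hJt : |J| ≤ C * t := abs_le.mpr ⟨hlb, hub⟩
    have h3 : t ≤ ε / (C + 1) := min_le_right _ _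
    have h4 : C * t ≤ C * (ε / (C + 1)) := mul_le_mul_of_nonneg_left h3 hC0
    have h5 : C * (ε / (C + 1)) ≤ ε := by
      rw [mul_div_assoc', div_le_iff₀ (by linarith : (0:ℝ) < C + 1)]
      nlinarith
    linarith
  have : |J| ≤ 0 := le_of_forall_pos_le_add fun ε hε => by
    rw [zero_add]; exact hJle ε hε
  exact abs_eq_zero.mp (le_antisymm this (abs_nonneg J))
end

section
/- (Continuous stationary solutions are constant.) Let Ω ⊆ ℝⁿ be a bounded, open, connected set. Let K : Ω × Ω → ℝ be measurable with λ ≤ K(x,y) for all x,y ∈ Ω for some λ > 0, and sup_{x∈Ω} ‖K(x,·)‖_{L¹(Ω)} < ∞. Let a > 0 and let ρ' : ℝ → ℝ be Lipschitz continuous with ρ'(z) = 0 for |z| ≥ a, ρ'(0) = 0, ρ'(z) > 0 for z ∈ (−a, 0), and ρ'(z) < 0 for z ∈ (0, a). If u : Ω → ℝ is bounded and continuous and satisfies ∫_Ω K(x,y) ρ'(u(x) − u(y)) dy = 0 for every x ∈ Ω, then u is constant on Ω. -/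
open MeasureTheory Set

/-- Continuous stationary solutions are constant: on a bounded, open,
connected domain `Ω`, with a kernel bounded below by `λ > 0` and with uniformly bounded
`L¹` norms, and `ρ'` Lipschitz, vanishing outside `(−a,a)`, vanishing at `0`, positive on
`(−a,0)` and negative on `(0,a)`, every bounded continuous stationary solution
(`∫_Ω K(x,y) ρ'(u(x) − u(y)) dy = 0` for all `x ∈ Ω`) is constant on `Ω`. -/
theorem statement18
    (n : ℕ) (Ω : Set (EuclideanSpace ℝ (Fin n)))
    (hΩopen : IsOpen Ω) (hΩconn : IsConnected Ω) (hΩbdd : Bornology.IsBounded Ω)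
    -- kernel bounded below by `lam > 0` on `Ω × Ω`, uniformly `L¹`-bounded:
    (K : EuclideanSpace ℝ (Fin n) → EuclideanSpace ℝ (Fin n) → ℝ)
    (hKmeas : Measurable (Function.uncurry K))
    (lam : ℝ) (hlam : 0 < lam) (hKlow : ∀ x ∈ Ω, ∀ y ∈ Ω, lam ≤ K x y)
    (hKint : ∀ x ∈ Ω, IntegrableOn (K x) Ω)
    (D : ℝ) (hD : ∀ x ∈ Ω, (∫ y in Ω, |K x y|) ≤ D)
    -- the recognition-derivative `ρ'`:
    (a : ℝ) (ha : 0 < a)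
    (ρ' : ℝ → ℝ) (L_ρ : ℝ) (hρlip : ∀ z z' : ℝ, |ρ' z - ρ' z'| ≤ L_ρ * |z - z'|)
    (hρsupp : ∀ z : ℝ, a ≤ |z| → ρ' z = 0)
    (hρzero : ρ' 0 = 0)
    (hρpos : ∀ z : ℝ, -a < z → z < 0 → 0 < ρ' z)
    (hρneg : ∀ z : ℝ, 0 < z → z < a → ρ' z < 0)
    -- `u` bounded, continuous, stationary:
    (u : EuclideanSpace ℝ (Fin n) → ℝ)
    (hucont : ContinuousOn u Ω) (M : ℝ) (hubd : ∀ x ∈ Ω, |u x| ≤ M)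
    (hstat : ∀ x ∈ Ω, (∫ y in Ω, K x y * ρ' (u x - u y)) = 0) :
    ∀ x ∈ Ω, ∀ x' ∈ Ω, u x = u x' := by
  classical
  have hΩne : Ω.Nonempty := hΩconn.nonempty
  obtain ⟨x₀, hx₀⟩ := hΩne
  have hΩmeas : MeasurableSet Ω := hΩopen.measurableSet
  have hΩfin : volume Ω < ⊤ := hΩbdd.measure_lt_top
  have hΩpos : 0 < volume Ω := hΩopen.measure_pos volume ⟨x₀, hx₀⟩
  -- Lipschitz constant is nonnegative, ρ' is continuous and bounded
  have hL0 : 0 ≤ L_ρ := by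
    have h1 := hρlip 1 0
    have h2 : (0:ℝ) ≤ |ρ' 1 - ρ' 0| := abs_nonneg _
    simp only [sub_zero, abs_one, mul_one] at h1
    linarith
  have hρlip0 : ∀ z : ℝ, |ρ' z| ≤ L_ρ * |z| := by
    intro z
    have := hρlip z 0
    simpa [hρzero] using this
  have hρcont : Continuous ρ' := by
    have : LipschitzWith ⟨L_ρ, hL0⟩ ρ' := by
      apply LipschitzWith.of_dist_le_mul
      intro z z'
      rw [Real.dist_eq, Real.dist_eq]; exact hρlip z z'
    exact this.continuous
  have hρbd : ∀ z : ℝ, |ρ' z| ≤ L_ρ * a := by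
    intro z
    rcases le_or_gt a |z| with h | h
    · simp [hρsupp z h, mul_nonneg hL0 ha.le]
    · exact (hρlip0 z).trans (by nlinarith [abs_nonneg z])
  have hLpos : 0 < L_ρ := by
    have hp := hρpos (-(a/2)) (by linarith) (by linarith)
    have hb := hρlip0 (-(a/2))
    rw [abs_of_pos hp] at hb
    rw [abs_neg, abs_of_pos (by linarith : (0:ℝ) < a/2)] at hb
    nlinarith
  have hρnonpos : ∀ z : ℝ, 0 ≤ z → ρ' z ≤ 0 := by
    intro z hz
    rcases eq_or_lt_of_le hz with h | h
    · simp [← h, hρzero]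
    · rcases lt_or_ge z a with h2 | h2
      · exact (hρneg z h h2).le
      · simp [hρsupp z (by rw [abs_of_pos h]; exact h2)]
  -- D is positive
  have hDpos : 0 < D := by
    have h1 : ∫ y in Ω, lam ≤ ∫ y in Ω, |K x₀ y| := by
      apply setIntegral_mono_on (integrableOn_const hΩfin.ne)
        ((hKint x₀ hx₀).abs) hΩmeas
      intro y hy
      calc lam ≤ K x₀ y := hKlow x₀ hx₀ y hy
        _ ≤ |K x₀ y| := le_abs_self _
    rw [setIntegral_const, smul_eq_mul, measureReal_def] at h1
    have h2 : 0 < (volume Ω).toReal := ENNReal.toReal_pos hΩpos.ne' hΩfin.ne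
    have := hD x₀ hx₀
    nlinarith
  -- the supremum value
  have hbddA : BddAbove (u '' Ω) := by
    refine ⟨M, ?_⟩
    rintro v ⟨y, hy, rfl⟩
    exact (abs_le.1 (hubd y hy)).2
  have hAne : (u '' Ω).Nonempty := ⟨u x₀, mem_image_of_mem u hx₀⟩
  set M₀ := sSup (u '' Ω) with hM₀
  have hle : ∀ x ∈ Ω, u x ≤ M₀ := fun x hx => le_csSup hbddA (mem_image_of_mem u hx)
  -- KEY: no value of u in (M₀ - a, M₀)
  have key : ∀ xb ∈ Ω, ¬ (M₀ - a < u xb ∧ u xb < M₀) := by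
    rintro xb hxb ⟨hw1, hw2⟩
    set w := u xb with hw
    set t := M₀ - w with htdef
    have ht0 : 0 < t := by simp [htdef]; linarith
    have hta : t < a := by simp [htdef]; linarith
    set δ := min (t/4) ((a-t)/2) with hδdef
    have hδ0 : 0 < δ := lt_min (by linarith) (by linarith)
    have hδ1 : δ ≤ t/4 := min_le_left _ _
    have hδ2 : δ ≤ (a-t)/2 := min_le_right _ _
    set U := Ω ∩ u ⁻¹' Ioo (w - δ) (w + δ) with hUdef
    have hUopen : IsOpen U := hucont.isOpen_inter_preimage hΩopen isOpen_Ioo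
    have hUsub : U ⊆ Ω := inter_subset_left
    have hUne : xb ∈ U := ⟨hxb, by constructor <;> [linarith; linarith]⟩
    have hUpos : 0 < volume U := hUopen.measure_pos volume ⟨xb, hUne⟩
    have hUfin : volume U < ⊤ := lt_of_le_of_lt (measure_mono hUsub) hΩfin
    have hUr : 0 < (volume U).toReal := ENNReal.toReal_pos hUpos.ne' hUfin.ne
    -- maximum of ρ' on [t/2, t+δ]
    obtain ⟨z₁, hz₁mem, hz₁max⟩ :=
      isCompact_Icc.exists_isMaxOn (α := ℝ) (nonempty_Icc.2 (by linarith : t/2 ≤ t + δ))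
        hρcont.continuousOn
    set m := -ρ' z₁ with hmdef
    have hz₁lt : ρ' z₁ < 0 := by
      apply hρneg z₁ (lt_of_lt_of_le (by linarith) hz₁mem.1)
      exact lt_of_le_of_lt hz₁mem.2 (by linarith)
    have hm : 0 < m := by rw [hmdef]; linarith
    -- choose ε
    set ε := min (t/4) (lam * m * (volume U).toReal / (2 * L_ρ * D)) with hεdef
    have hε0 : 0 < ε := lt_min (by linarith)
      (div_pos (by positivity) (by positivity))
    have hε1 : ε ≤ t/4 := min_le_left _ _
    have hε2 : ε ≤ lam * m * (volume U).toReal / (2 * L_ρ * D) := min_le_right _ _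
    -- pick x with u x > M₀ - ε
    obtain ⟨v, hvmem, hv⟩ := exists_lt_of_lt_csSup hAne (show M₀ - ε < M₀ by linarith)
    obtain ⟨x, hx, rfl⟩ := hvmem
    set f := fun y => K x y * ρ' (u x - u y) with hfdef
    -- integrability
    have humeas : AEMeasurable u (volume.restrict Ω) := hucont.aemeasurable hΩmeas
    have hginner : AEStronglyMeasurable (fun y => ρ' (u x - u y)) (volume.restrict Ω) := by
      exact (hρcont.measurable.comp_aemeasurable (aemeasurable_const.sub humeas)).aestronglyMeasurable
    have hfint : IntegrableOn f Ω := by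
      have h1 : Integrable (fun y => ρ' (u x - u y) * K x y) (volume.restrict Ω) := by
        apply Integrable.bdd_mul (c := L_ρ * a) (hKint x hx) hginner
        exact ae_of_all _ fun y => by simpa using hρbd (u x - u y)
      exact h1.congr (ae_of_all _ fun y => mul_comm _ _)
    -- pointwise bound on U
    have hbU : ∀ y ∈ U, f y ≤ lam * (-m) := by
      rintro y ⟨hyΩ, hy1, hy2⟩
      have hd1 : t/2 ≤ u x - u y := by
        have := hle x hx
        linarith
      have hd2 : u x - u y ≤ t + δ := by
        have := hle x hx
        linarith
      have hρle : ρ' (u x - u y) ≤ -m := by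
        have := hz₁max ⟨hd1, hd2⟩
        simpa [hmdef] using this
      have hρle0 : ρ' (u x - u y) ≤ 0 := hρle.trans (by linarith)
      calc f y ≤ lam * ρ' (u x - u y) :=
            mul_le_mul_of_nonpos_right (hKlow x hx y hyΩ) hρle0
        _ ≤ lam * (-m) := mul_le_mul_of_nonneg_left hρle hlam.le
    -- pointwise bound on Ω
    have hbO : ∀ y ∈ Ω, f y ≤ |K x y| * (L_ρ * ε) := by
      intro y hy
      have hK0 : 0 < K x y := lt_of_lt_of_le hlam (hKlow x hx y hy)
      have hρle : ρ' (u x - u y) ≤ L_ρ * ε := by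
        rcases le_or_gt 0 (u x - u y) with h | h
        · exact (hρnonpos _ h).trans (by positivity)
        · have h2 : -ε < u x - u y := by
            have := hle y hy
            linarith
          calc ρ' (u x - u y) ≤ |ρ' (u x - u y)| := le_abs_self _
            _ ≤ L_ρ * |u x - u y| := hρlip0 _
            _ ≤ L_ρ * ε := by
                apply mul_le_mul_of_nonneg_left _ hL0
                rw [abs_of_neg h]; linarith
      calc f y ≤ K x y * (L_ρ * ε) := mul_le_mul_of_nonneg_left hρle hK0.le
        _ = |K x y| * (L_ρ * ε) := by rw [abs_of_pos hK0]
    -- splitting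
    have hsplit : ∫ y in Ω, f y = (∫ y in U, f y) + ∫ y in Ω \ U, f y := by
      rw [← setIntegral_union disjoint_sdiff_self_right (hΩmeas.diff hUopen.measurableSet)
        (hfint.mono_set hUsub) (hfint.mono_set diff_subset), union_diff_cancel hUsub]
    have hI1 : ∫ y in U, f y ≤ (volume U).toReal * (lam * (-m)) := by
      have := setIntegral_mono_on (hfint.mono_set hUsub)
        (integrableOn_const hUfin.ne) hUopen.measurableSet hbU
      rwa [setIntegral_const, smul_eq_mul, measureReal_def] at this
    have hI2 : ∫ y in Ω \ U, f y ≤ D * (L_ρ * ε) := by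
      have hgint : IntegrableOn (fun y => |K x y| * (L_ρ * ε)) Ω :=
        (hKint x hx).abs.mul_const _
      have h1 : ∫ y in Ω \ U, f y ≤ ∫ y in Ω \ U, |K x y| * (L_ρ * ε) :=
        setIntegral_mono_on (hfint.mono_set diff_subset)
          (hgint.mono_set diff_subset) (hΩmeas.diff hUopen.measurableSet)
          (fun y hy => hbO y hy.1)
      have h2 : ∫ y in Ω \ U, |K x y| * (L_ρ * ε) ≤ ∫ y in Ω, |K x y| * (L_ρ * ε) := by
        apply setIntegral_mono_set hgint
        · exact ae_of_all _ fun y => by positivity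
        · exact HasSubset.Subset.eventuallyLE diff_subset
      have h3 : ∫ y in Ω, |K x y| * (L_ρ * ε) = (∫ y in Ω, |K x y|) * (L_ρ * ε) :=
        integral_mul_const _ _
      have h4 : (∫ y in Ω, |K x y|) * (L_ρ * ε) ≤ D * (L_ρ * ε) := by
        apply mul_le_mul_of_nonneg_right (hD x hx) (by positivity)
      linarith
    have hzero := hstat x hx
    have h5 : D * (L_ρ * ε) ≤ lam * m * (volume U).toReal / 2 := by
      rw [le_div_iff₀ (by positivity : (0:ℝ) < 2 * L_ρ * D)] at hε2
      nlinarith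
    have h6 : (0:ℝ) = ∫ y in Ω, f y := hzero.symm
    rw [hsplit] at h6
    nlinarith [hUr, hm, hlam, mul_pos (mul_pos hlam hm) hUr]
  -- connectedness argument
  have hall : ∀ x ∈ Ω, u x = M₀ := by
    intro x hx
    by_contra hne
    have hxlt : u x < M₀ := lt_of_le_of_ne (hle x hx) hne
    have hxle : u x ≤ M₀ - a := by
      by_contra h
      push_neg at h
      exact key x hx ⟨h, hxlt⟩
    set S := Ω ∩ u ⁻¹' Ioi (M₀ - a) with hSdef
    set T := Ω ∩ u ⁻¹' Iio (M₀ - a/2) with hTdef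
    have hSopen : IsOpen S := hucont.isOpen_inter_preimage hΩopen isOpen_Ioi
    have hTopen : IsOpen T := hucont.isOpen_inter_preimage hΩopen isOpen_Iio
    have hcover : Ω ⊆ S ∪ T := by
      intro z hz
      rcases lt_or_ge (M₀ - a) (u z) with h | h
      · exact Or.inl ⟨hz, h⟩
      · exact Or.inr ⟨hz, by simp only [mem_preimage, mem_Iio]; linarith⟩
    obtain ⟨v, hvmem, hv⟩ := exists_lt_of_lt_csSup hAne (show M₀ - a < M₀ by linarith)
    obtain ⟨x₁, hx₁, rfl⟩ := hvmem
    have hSne : (Ω ∩ S).Nonempty := ⟨x₁, hx₁, hx₁, hv⟩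
    have hTne : (Ω ∩ T).Nonempty := ⟨x, hx, hx, by simp only [mem_preimage, mem_Iio]; linarith⟩
    obtain ⟨z, hzΩ, hzS, hzT⟩ := hΩconn.isPreconnected S T hSopen hTopen hcover hSne hTne
    have h1 : M₀ - a < u z := hzS.2
    have h2 : u z < M₀ - a/2 := hzT.2
    exact key z hzΩ ⟨h1, by linarith⟩
  intro x hx x' hx'
  rw [hall x hx, hall x' hx']
end

section
/- (Short time existence and uniqueness for the inhomogeneous problem.) Let Ω ⊆ ℝⁿ be a nonempty measurable set, K an admissible kernel, ρ a recognition function, and u₀ : Ω → ℝ bounded continuous. Let f : ℝ × Ω × [0,∞) → ℝ be continuous, bounded, and Lipschitz continuous in its first argument uniformly in the others: there is L_f ≥ 0 with |f(a,x,t) − f(b,x,t)| ≤ L_f |a − b| for all a, b ∈ ℝ, x ∈ Ω, t ≥ 0. Then there exists T > 0 such that there is exactly one bounded continuous u : Ω × [0,T] → ℝ satisfying u(x,t) = u₀(x) + ∫₀ᵗ ( g[u](x,s) + f(u(x,s), x, s) ) ds for all (x,t) ∈ Ω × [0,T]. -/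
open MeasureTheory Set Filter

variable {n : ℕ}
local notation "E" => EuclideanSpace ℝ (Fin n)


lemma st19_contDeriv (ρ : ℝ → ℝ)
    (hρ'lip : ∀ R : ℝ, 0 < R → ∃ L : ℝ, ∀ a b : ℝ, |a| ≤ R → |b| ≤ R →
        |deriv ρ a - deriv ρ b| ≤ L * |a - b|) :
    Continuous (deriv ρ) := by
  rw [continuous_iff_continuousAt]
  intro a
  obtain ⟨L, hL⟩ := hρ'lip (|a| + 1) (by positivity)
  have hlip : LipschitzOnWith (Real.toNNReal (max L 0)) (deriv ρ)
      (Icc (-(|a| + 1)) (|a| + 1)) := by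
    rw [lipschitzOnWith_iff_dist_le_mul]
    intro x hx y hy
    rw [Real.dist_eq, Real.dist_eq, Real.coe_toNNReal _ (le_max_right L 0)]
    have hx' : |x| ≤ |a| + 1 := abs_le.2 ⟨hx.1, hx.2⟩
    have hy' : |y| ≤ |a| + 1 := abs_le.2 ⟨hy.1, hy.2⟩
    calc |deriv ρ x - deriv ρ y| ≤ L * |x - y| := hL x y hx' hy'
    _ ≤ max L 0 * |x - y| := by
        apply mul_le_mul_of_nonneg_right (le_max_left L 0) (abs_nonneg _)
  exact hlip.continuousOn.continuousAt (Icc_mem_nhds (by linarith [neg_abs_le a])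
    (by linarith [le_abs_self a]))



lemma st19_slice_cont {T : ℝ} {Ω : Set E} {w : E → ℝ → ℝ}
    (hwcont : ContinuousOn (fun p : E × ℝ => w p.1 p.2) (Ω ×ˢ Icc 0 T))
    {s : ℝ} (hs : s ∈ Icc (0:ℝ) T) :
    ContinuousOn (fun y => w y s) Ω :=
  hwcont.comp ((continuous_id.prodMk continuous_const).continuousOn)
    (fun y hy => ⟨hy, hs⟩)

lemma st19_integrable {Ω : Set E} (hΩmeas : MeasurableSet Ω)
    {K : E → E → ℝ} (hKnonneg : ∀ x y, 0 ≤ K x y) (hKmeas : Measurable (Function.uncurry K))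
    (hKint : ∀ x ∈ Ω, IntegrableOn (K x) Ω)
    {ρ : ℝ → ℝ} (hρ'cont : Continuous (deriv ρ))
    {T : ℝ} {w : E → ℝ → ℝ}
    (hwcont : ContinuousOn (fun p : E × ℝ => w p.1 p.2) (Ω ×ˢ Icc 0 T))
    {Mw : ℝ} (hwbd : ∀ x ∈ Ω, ∀ t ∈ Icc (0:ℝ) T, |w x t| ≤ Mw)
    {Cρ : ℝ} (hCρ : ∀ a : ℝ, |a| ≤ 2*Mw → |deriv ρ a| ≤ Cρ)
    {x z : E} (hx : x ∈ Ω) (hz : z ∈ Ω) {s : ℝ} (hs : s ∈ Icc (0:ℝ) T) :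
    IntegrableOn (fun y => K x y * deriv ρ (w z s - w y s)) Ω := by
  apply Integrable.mono' (g := fun y => Cρ * K x y) ((hKint x hx).const_mul Cρ)
  · exact (hKmeas.of_uncurry_left.aestronglyMeasurable).mul
      ((hρ'cont.comp_continuousOn
        (continuousOn_const.sub (st19_slice_cont hwcont hs))).aestronglyMeasurable hΩmeas)
  · rw [ae_restrict_iff' hΩmeas]
    filter_upwards with y hy
    have harg : |w z s - w y s| ≤ 2 * Mw := by
      have h1 := hwbd z hz s hs
      have h2 := hwbd y hy s hs
      calc |w z s - w y s| ≤ |w z s| + |w y s| := abs_sub _ _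
      _ ≤ 2 * Mw := by linarith
    rw [Real.norm_eq_abs, abs_mul, abs_of_nonneg (hKnonneg x y), mul_comm]
    exact mul_le_mul_of_nonneg_right (hCρ _ harg) (hKnonneg x y)

lemma st19_G_cont {Ω : Set E} (hΩmeas : MeasurableSet Ω)
    {K : E → E → ℝ} (hKnonneg : ∀ x y, 0 ≤ K x y) (hKmeas : Measurable (Function.uncurry K))
    (hKint : ∀ x ∈ Ω, IntegrableOn (K x) Ω)
    (hKcont : ∀ x ∈ Ω, ∀ ε > (0:ℝ), ∃ δ > (0:ℝ), ∀ x' ∈ Ω, dist x' x < δ →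
        (∫ y in Ω, |K x' y - K x y|) < ε)
    {ρ : ℝ → ℝ} (hρ'cont : Continuous (deriv ρ))
    {f : ℝ → E → ℝ → ℝ}
    (hfcont : ContinuousOn (fun p : ℝ × E × ℝ => f p.1 p.2.1 p.2.2) (univ ×ˢ Ω ×ˢ Ici 0))
    {T : ℝ} {w : E → ℝ → ℝ}
    (hwcont : ContinuousOn (fun p : E × ℝ => w p.1 p.2) (Ω ×ˢ Icc 0 T))
    {Mw : ℝ} (hwbd : ∀ x ∈ Ω, ∀ t ∈ Icc (0:ℝ) T, |w x t| ≤ Mw)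
    {Cρ : ℝ} (hCρ : ∀ a : ℝ, |a| ≤ 2*Mw → |deriv ρ a| ≤ Cρ) (hCρ0 : 0 ≤ Cρ) :
    ContinuousOn (fun p : E × ℝ =>
      (∫ y in Ω, K p.1 y * deriv ρ (w p.1 p.2 - w y p.2)) + f (w p.1 p.2) p.1 p.2)
      (Ω ×ˢ Icc 0 T) := by
  set S := Ω ×ˢ Icc (0:ℝ) T with hS
  have habs : ∀ z ∈ Ω, ∀ y ∈ Ω, ∀ s ∈ Icc (0:ℝ) T, |w z s - w y s| ≤ 2 * Mw := by
    intro z hz y hy s hs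
    have h1 := hwbd z hz s hs
    have h2 := hwbd y hy s hs
    calc |w z s - w y s| ≤ |w z s| + |w y s| := abs_sub _ _
    _ ≤ 2 * Mw := by linarith
  intro p hp
  have hx : p.1 ∈ Ω := hp.1
  have ht : p.2 ∈ Icc (0:ℝ) T := hp.2
  apply ContinuousWithinAt.add
  swap
  · -- f part
    exact (hfcont.comp
      (hwcont.prodMk ((continuous_fst.continuousOn).prodMk (continuous_snd.continuousOn)))
      (fun q hq => ⟨mem_univ _, hq.1, hq.2.1⟩)) p hp
  -- kernel part
  set g : E × ℝ → ℝ := fun q => ∫ y in Ω, K q.1 y * deriv ρ (w q.1 q.2 - w y q.2) with hg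
  set B : E × ℝ → ℝ := fun q => ∫ y in Ω, K p.1 y * deriv ρ (w q.1 q.2 - w y q.2) with hBdef
  have hBint : ∀ q ∈ S, IntegrableOn (fun y => K p.1 y * deriv ρ (w q.1 q.2 - w y q.2)) Ω := by
    intro q hq
    exact st19_integrable (Mw := Mw) (Cρ := Cρ) hΩmeas hKnonneg hKmeas hKint hρ'cont
      hwcont hwbd hCρ hx hq.1 hq.2
  have hgint : ∀ q ∈ S, IntegrableOn (fun y => K q.1 y * deriv ρ (w q.1 q.2 - w y q.2)) Ω := by
    intro q hq
    exact st19_integrable (Mw := Mw) (Cρ := Cρ) hΩmeas hKnonneg hKmeas hKint hρ'cont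
      hwcont hwbd hCρ hq.1 hq.1 hq.2
  -- A-bound
  have hAbound : ∀ q ∈ S, |g q - B q| ≤ Cρ * ∫ y in Ω, |K q.1 y - K p.1 y| := by
    intro q hq
    have hsub : g q - B q = ∫ y in Ω, (K q.1 y - K p.1 y) * deriv ρ (w q.1 q.2 - w y q.2) := by
      rw [hg, hBdef]
      rw [← integral_sub (hgint q hq) (hBint q hq)]
      congr 1; funext y; ring
    rw [hsub]
    have : ‖∫ y in Ω, (K q.1 y - K p.1 y) * deriv ρ (w q.1 q.2 - w y q.2)‖
        ≤ ∫ y in Ω, Cρ * |K q.1 y - K p.1 y| := by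
      apply norm_integral_le_of_norm_le (((hKint q.1 hq.1).sub (hKint p.1 hx)).abs.const_mul Cρ)
      rw [ae_restrict_iff' hΩmeas]
      filter_upwards with y hy
      rw [Real.norm_eq_abs, abs_mul, mul_comm]
      exact mul_le_mul_of_nonneg_right (hCρ _ (habs q.1 hq.1 y hy q.2 hq.2)) (abs_nonneg _)
    rw [integral_const_mul] at this
    exact this
  have hItend : Tendsto (fun q : E × ℝ => ∫ y in Ω, |K q.1 y - K p.1 y|) (nhdsWithin p S)
      (nhds 0) := by
    rw [Metric.tendsto_nhdsWithin_nhds]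
    intro ε hε
    obtain ⟨δ, hδ, hδ'⟩ := hKcont p.1 hx ε hε
    refine ⟨δ, hδ, fun {q} hqS hdist => ?_⟩
    rw [dist_zero_right, Real.norm_eq_abs, abs_of_nonneg (integral_nonneg fun y => abs_nonneg _)]
    apply hδ' q.1 hqS.1
    calc dist q.1 p.1 ≤ dist q p := by rw [Prod.dist_eq]; exact le_max_left _ _
    _ < δ := hdist
  have hA0 : Tendsto (fun q => g q - B q) (nhdsWithin p S) (nhds 0) := by
    rw [tendsto_zero_iff_abs_tendsto_zero]
    apply squeeze_zero' (Eventually.of_forall fun q => abs_nonneg _)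
    · filter_upwards [self_mem_nhdsWithin] with q hq
      exact hAbound q hq
    · have := hItend.const_mul Cρ
      simpa using this
  have hB : Tendsto B (nhdsWithin p S) (nhds (g p)) := by
    have hgp : g p = ∫ y in Ω, K p.1 y * deriv ρ (w p.1 p.2 - w y p.2) := rfl
    rw [hgp]
    apply tendsto_integral_filter_of_dominated_convergence (fun y => Cρ * K p.1 y)
    · filter_upwards [self_mem_nhdsWithin] with q hq
      exact (hKmeas.of_uncurry_left.aestronglyMeasurable).mul
        ((hρ'cont.comp_continuousOn
          (continuousOn_const.sub (st19_slice_cont hwcont hq.2))).aestronglyMeasurable hΩmeas)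
    · filter_upwards [self_mem_nhdsWithin] with q hq
      rw [ae_restrict_iff' hΩmeas]
      filter_upwards with y hy
      rw [Real.norm_eq_abs, abs_mul, abs_of_nonneg (hKnonneg p.1 y), mul_comm]
      exact mul_le_mul_of_nonneg_right (hCρ _ (habs q.1 hq.1 y hy q.2 hq.2)) (hKnonneg p.1 y)
    · exact (hKint p.1 hx).const_mul Cρ
    · rw [ae_restrict_iff' hΩmeas]
      filter_upwards with y hy
      apply Tendsto.const_mul
      apply (hρ'cont.continuousAt.tendsto).comp
      apply Tendsto.sub
      · exact hwcont p hp
      · have hyt : ((y, p.2) : E × ℝ) ∈ S := ⟨hy, ht⟩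
        have hmk : Tendsto (fun q : E × ℝ => ((y, q.2) : E × ℝ)) (nhdsWithin p S)
            (nhdsWithin (y, p.2) S) := by
          rw [tendsto_nhdsWithin_iff]
          constructor
          · exact Tendsto.prodMk_nhds tendsto_const_nhds
              ((continuous_snd.tendsto p).mono_left nhdsWithin_le_nhds)
          · filter_upwards [self_mem_nhdsWithin] with q hq
            exact ⟨hy, hq.2⟩
        show Tendsto ((fun r : E × ℝ => w r.1 r.2) ∘ (fun q : E × ℝ => ((y, q.2) : E × ℝ)))
          (nhdsWithin p S) (nhds (w y p.2))
        exact Filter.Tendsto.comp (hwcont (y, p.2) hyt) hmk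
  have : Tendsto g (nhdsWithin p S) (nhds (g p)) := by
    have h := hA0.add hB
    rw [zero_add] at h
    convert h using 2 with q
    ring
  exact this

lemma st19_int_bound {Ω : Set E} (hΩmeas : MeasurableSet Ω)
    {K : E → E → ℝ} (hKnonneg : ∀ x y, 0 ≤ K x y) (hKmeas : Measurable (Function.uncurry K))
    (hKint : ∀ x ∈ Ω, IntegrableOn (K x) Ω)
    {D : ℝ} (hD : ∀ x ∈ Ω, (∫ y in Ω, K x y) ≤ D)
    {ρ : ℝ → ℝ} (hρ'cont : Continuous (deriv ρ))
    {T : ℝ} {w : E → ℝ → ℝ}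
    (hwcont : ContinuousOn (fun p : E × ℝ => w p.1 p.2) (Ω ×ˢ Icc 0 T))
    {Mw : ℝ} (hwbd : ∀ x ∈ Ω, ∀ t ∈ Icc (0:ℝ) T, |w x t| ≤ Mw)
    {Cρ : ℝ} (hCρ : ∀ a : ℝ, |a| ≤ 2*Mw → |deriv ρ a| ≤ Cρ) (hCρ0 : 0 ≤ Cρ)
    {x : E} (hx : x ∈ Ω) {s : ℝ} (hs : s ∈ Icc (0:ℝ) T) :
    |∫ y in Ω, K x y * deriv ρ (w x s - w y s)| ≤ Cρ * D := by
  have h1 : ‖∫ y in Ω, K x y * deriv ρ (w x s - w y s)‖ ≤ ∫ y in Ω, Cρ * K x y := by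
    apply norm_integral_le_of_norm_le ((hKint x hx).const_mul Cρ)
    rw [ae_restrict_iff' hΩmeas]
    filter_upwards with y hy
    have harg : |w x s - w y s| ≤ 2 * Mw := by
      have h1 := hwbd x hx s hs
      have h2 := hwbd y hy s hs
      calc |w x s - w y s| ≤ |w x s| + |w y s| := abs_sub _ _
      _ ≤ 2 * Mw := by linarith
    rw [Real.norm_eq_abs, abs_mul, abs_of_nonneg (hKnonneg x y), mul_comm]
    exact mul_le_mul_of_nonneg_right (hCρ _ harg) (hKnonneg x y)
  rw [integral_const_mul] at h1
  calc |∫ y in Ω, K x y * deriv ρ (w x s - w y s)| ≤ Cρ * ∫ y in Ω, K x y := h1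
  _ ≤ Cρ * D := mul_le_mul_of_nonneg_left (hD x hx) hCρ0



lemma st19_Phi_cont {Ω : Set E}
    (u₀ : E → ℝ) (hu₀cont : ContinuousOn u₀ Ω)
    {T : ℝ} (hT : 0 ≤ T)
    {G : E → ℝ → ℝ}
    (hG : ContinuousOn (fun p : E × ℝ => G p.1 p.2) (Ω ×ˢ Icc 0 T))
    {BG : ℝ} (hBG : ∀ x ∈ Ω, ∀ s ∈ Icc (0:ℝ) T, |G x s| ≤ BG) :
    ContinuousOn (fun p : E × ℝ => u₀ p.1 + ∫ s in (0:ℝ)..p.2, G p.1 s) (Ω ×ˢ Icc 0 T) := by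
  set S := Ω ×ˢ Icc (0:ℝ) T with hS
  have huIcc : ∀ a ∈ Icc (0:ℝ) T, ∀ b ∈ Icc (0:ℝ) T, uIcc a b ⊆ Icc 0 T := by
    intro a ha b hb
    rw [← uIcc_of_le hT]
    exact uIcc_subset_uIcc (by rwa [uIcc_of_le hT]) (by rwa [uIcc_of_le hT])
  have hGsl : ∀ x' ∈ Ω, ContinuousOn (fun s => G x' s) (Icc 0 T) := fun x' hx' =>
    hG.comp ((continuous_const.prodMk continuous_id).continuousOn) (fun s hs => ⟨hx', hs⟩)
  have hGii : ∀ x' ∈ Ω, ∀ a ∈ Icc (0:ℝ) T, ∀ b ∈ Icc (0:ℝ) T,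
      IntervalIntegrable (fun s => G x' s) volume a b := fun x' hx' a ha b hb =>
    ((hGsl x' hx').mono (huIcc a ha b hb)).intervalIntegrable
  intro p hp
  have hx : p.1 ∈ Ω := hp.1
  have ht : p.2 ∈ Icc (0:ℝ) T := hp.2
  set F : E × ℝ → ℝ := fun q => u₀ q.1 + ∫ s in (0:ℝ)..q.2, G q.1 s with hF
  have h0T : (0:ℝ) ∈ Icc (0:ℝ) T := ⟨le_refl _, hT⟩
  -- the integral of |G q.1 - G p.1| over [0,T] tends to 0
  have hJ : Tendsto (fun q : E × ℝ => ∫ s in (0:ℝ)..T, |G q.1 s - G p.1 s|)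
      (nhdsWithin p S) (nhds 0) := by
    have := intervalIntegral.tendsto_integral_filter_of_dominated_convergence
      (μ := volume) (a := 0) (b := T) (l := nhdsWithin p S)
      (F := fun q s => |G q.1 s - G p.1 s|) (f := fun _ => (0:ℝ))
      (bound := fun _ => 2 * BG)
      ?_ ?_ (intervalIntegrable_const) ?_
    · simpa using this
    · filter_upwards [self_mem_nhdsWithin] with q hq
      have : ContinuousOn (fun s => |G q.1 s - G p.1 s|) (Icc 0 T) :=
        ((hGsl q.1 hq.1).sub (hGsl p.1 hx)).abs
      rw [uIoc_of_le hT]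
      exact (this.mono Ioc_subset_Icc_self).aestronglyMeasurable measurableSet_Ioc
    · filter_upwards [self_mem_nhdsWithin] with q hq
      filter_upwards with s
      intro hs
      rw [uIoc_of_le hT] at hs
      have hs' : s ∈ Icc (0:ℝ) T := Ioc_subset_Icc_self hs
      have h1 := hBG q.1 hq.1 s hs'
      have h2 := hBG p.1 hx s hs'
      rw [Real.norm_eq_abs, abs_abs]
      calc |G q.1 s - G p.1 s| ≤ |G q.1 s| + |G p.1 s| := abs_sub _ _
      _ ≤ 2 * BG := by linarith
    · filter_upwards with s
      intro hs
      rw [uIoc_of_le hT] at hs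
      have hs' : s ∈ Icc (0:ℝ) T := Ioc_subset_Icc_self hs
      have hps : ((p.1, s) : E × ℝ) ∈ S := ⟨hx, hs'⟩
      have hmk : Tendsto (fun q : E × ℝ => ((q.1, s) : E × ℝ)) (nhdsWithin p S)
          (nhdsWithin (p.1, s) S) := by
        rw [tendsto_nhdsWithin_iff]
        constructor
        · exact Tendsto.prodMk_nhds ((continuous_fst.tendsto p).mono_left nhdsWithin_le_nhds)
            tendsto_const_nhds
        · filter_upwards [self_mem_nhdsWithin] with q hq
          exact ⟨hq.1, hs'⟩
      have hGq : Tendsto (fun q : E × ℝ => G q.1 s) (nhdsWithin p S) (nhds (G p.1 s)) := by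
        show Tendsto ((fun r : E × ℝ => G r.1 r.2) ∘ (fun q : E × ℝ => ((q.1, s) : E × ℝ)))
          (nhdsWithin p S) (nhds (G p.1 s))
        exact Filter.Tendsto.comp (hG (p.1, s) hps) hmk
      have := (hGq.sub (tendsto_const_nhds (x := G p.1 s))).abs
      rw [sub_self, abs_zero] at this
      exact this
  -- main estimate
  have hest : ∀ q ∈ S, |F q - F p| ≤ |u₀ q.1 - u₀ p.1|
      + (∫ s in (0:ℝ)..T, |G q.1 s - G p.1 s|) + BG * |q.2 - p.2| := by
    intro q hq
    have hq1 : q.1 ∈ Ω := hq.1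
    have hq2 : q.2 ∈ Icc (0:ℝ) T := hq.2
    have hint1 := hGii q.1 hq1 0 h0T q.2 hq2
    have hint2 := hGii p.1 hx 0 h0T q.2 hq2
    have hint3 := hGii p.1 hx 0 h0T p.2 ht
    have hsplit : F q - F p = (u₀ q.1 - u₀ p.1)
        + (∫ s in (0:ℝ)..q.2, (G q.1 s - G p.1 s))
        + ∫ s in p.2..q.2, G p.1 s := by
      rw [hF]
      simp only
      rw [intervalIntegral.integral_sub hint1 hint2,
        ← intervalIntegral.integral_interval_sub_left hint2 hint3]
      ring
    rw [hsplit]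
    have hterm1 : |∫ s in (0:ℝ)..q.2, (G q.1 s - G p.1 s)|
        ≤ ∫ s in (0:ℝ)..T, |G q.1 s - G p.1 s| := by
      calc |∫ s in (0:ℝ)..q.2, (G q.1 s - G p.1 s)|
          ≤ ∫ s in (0:ℝ)..q.2, |G q.1 s - G p.1 s| :=
            intervalIntegral.abs_integral_le_integral_abs hq2.1
      _ ≤ ∫ s in (0:ℝ)..T, |G q.1 s - G p.1 s| := by
          apply intervalIntegral.integral_mono_interval (le_refl (0:ℝ)) hq2.1 hq2.2
          · filter_upwards with s; positivity
          · exact ((hGii q.1 hq1 0 h0T T ⟨hT, le_refl _⟩).sub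
              (hGii p.1 hx 0 h0T T ⟨hT, le_refl _⟩)).abs
    have hterm2 : |∫ s in p.2..q.2, G p.1 s| ≤ BG * |q.2 - p.2| := by
      have := intervalIntegral.norm_integral_le_of_norm_le_const
        (C := BG) (a := p.2) (b := q.2) (f := fun s => G p.1 s) ?_
      · rwa [Real.norm_eq_abs] at this
      · intro s hs
        have hs' : s ∈ Icc (0:ℝ) T := (huIcc p.2 ht q.2 hq2) (Ioc_subset_Icc_self hs)
        rw [Real.norm_eq_abs]
        exact hBG p.1 hx s hs'
    calc |(u₀ q.1 - u₀ p.1) + (∫ s in (0:ℝ)..q.2, (G q.1 s - G p.1 s))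
          + ∫ s in p.2..q.2, G p.1 s|
        ≤ |(u₀ q.1 - u₀ p.1) + ∫ s in (0:ℝ)..q.2, (G q.1 s - G p.1 s)|
          + |∫ s in p.2..q.2, G p.1 s| := abs_add_le _ _
    _ ≤ |u₀ q.1 - u₀ p.1| + |∫ s in (0:ℝ)..q.2, (G q.1 s - G p.1 s)|
          + |∫ s in p.2..q.2, G p.1 s| := by gcongr; exact abs_add_le _ _
    _ ≤ |u₀ q.1 - u₀ p.1| + (∫ s in (0:ℝ)..T, |G q.1 s - G p.1 s|) + BG * |q.2 - p.2| := by
        gcongr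
  -- RHS tends to zero
  have hu₀0 : Tendsto (fun q : E × ℝ => |u₀ q.1 - u₀ p.1|) (nhdsWithin p S) (nhds 0) := by
    have hfst : Tendsto (fun q : E × ℝ => q.1) (nhdsWithin p S) (nhdsWithin p.1 Ω) := by
      rw [tendsto_nhdsWithin_iff]
      exact ⟨(continuous_fst.tendsto p).mono_left nhdsWithin_le_nhds,
        by filter_upwards [self_mem_nhdsWithin] with q hq using hq.1⟩
    have hcomp : Tendsto (u₀ ∘ (fun q : E × ℝ => q.1)) (nhdsWithin p S) (nhds (u₀ p.1)) :=
      Filter.Tendsto.comp (hu₀cont p.1 hx) hfst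
    have : Tendsto (fun q : E × ℝ => u₀ q.1 - u₀ p.1) (nhdsWithin p S)
        (nhds (u₀ p.1 - u₀ p.1)) := hcomp.sub (tendsto_const_nhds (x := u₀ p.1))
    rw [sub_self] at this
    have := this.abs
    rwa [abs_zero] at this
  have hsnd0 : Tendsto (fun q : E × ℝ => BG * |q.2 - p.2|) (nhdsWithin p S) (nhds 0) := by
    have : Tendsto (fun q : E × ℝ => q.2 - p.2) (nhdsWithin p S) (nhds 0) := by
      have := ((continuous_snd.tendsto p).mono_left
        (nhdsWithin_le_nhds (s := S))).sub (tendsto_const_nhds (x := p.2))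
      rwa [sub_self] at this
    have h2 := (this.abs).const_mul BG
    rwa [abs_zero, mul_zero] at h2
  have hRHS : Tendsto (fun q : E × ℝ => |u₀ q.1 - u₀ p.1|
      + (∫ s in (0:ℝ)..T, |G q.1 s - G p.1 s|) + BG * |q.2 - p.2|)
      (nhdsWithin p S) (nhds 0) := by
    have := (hu₀0.add hJ).add hsnd0
    simpa using this
  have hdiff0 : Tendsto (fun q => F q - F p) (nhdsWithin p S) (nhds 0) := by
    rw [tendsto_zero_iff_abs_tendsto_zero]
    apply squeeze_zero' (Eventually.of_forall fun q => abs_nonneg _)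
    · filter_upwards [self_mem_nhdsWithin] with q hq
      exact hest q hq
    · exact hRHS
  have : Tendsto F (nhdsWithin p S) (nhds (F p)) := by
    have h := hdiff0.add (tendsto_const_nhds (x := F p))
    rw [zero_add] at h
    simpa using h
  exact this



lemma st19_G_diff {Ω : Set E} (hΩmeas : MeasurableSet Ω)
    {K : E → E → ℝ} (hKnonneg : ∀ x y, 0 ≤ K x y)
    (hKint : ∀ x ∈ Ω, IntegrableOn (K x) Ω)
    {D : ℝ} (hD : ∀ x ∈ Ω, (∫ y in Ω, K x y) ≤ D)
    {ρ : ℝ → ℝ} {f : ℝ → E → ℝ → ℝ}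
    {L_f : ℝ} (hL_f : 0 ≤ L_f)
    (hflip : ∀ c c' : ℝ, ∀ x ∈ Ω, ∀ t : ℝ, 0 ≤ t → |f c x t - f c' x t| ≤ L_f * |c - c'|)
    {x : E} (hx : x ∈ Ω) {s : ℝ} (hs0 : 0 ≤ s)
    {w₁ w₂ : E → ℝ → ℝ}
    (hint₁ : IntegrableOn (fun y => K x y * deriv ρ (w₁ x s - w₁ y s)) Ω)
    (hint₂ : IntegrableOn (fun y => K x y * deriv ρ (w₂ x s - w₂ y s)) Ω)
    {R L' : ℝ} (hL'0 : 0 ≤ L')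
    (hlip : ∀ a b : ℝ, |a| ≤ 2*R → |b| ≤ 2*R → |deriv ρ a - deriv ρ b| ≤ L' * |a - b|)
    (h1bd : ∀ z ∈ Ω, |w₁ z s| ≤ R) (h2bd : ∀ z ∈ Ω, |w₂ z s| ≤ R)
    {b : ℝ} (hb0 : 0 ≤ b) (hb : ∀ z ∈ Ω, |w₁ z s - w₂ z s| ≤ b) :
    |((∫ y in Ω, K x y * deriv ρ (w₁ x s - w₁ y s)) + f (w₁ x s) x s)
     - ((∫ y in Ω, K x y * deriv ρ (w₂ x s - w₂ y s)) + f (w₂ x s) x s)|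
     ≤ (2 * D * L' + L_f) * b := by
  have hIdiff : |(∫ y in Ω, K x y * deriv ρ (w₁ x s - w₁ y s))
      - ∫ y in Ω, K x y * deriv ρ (w₂ x s - w₂ y s)| ≤ 2 * D * L' * b := by
    rw [← integral_sub hint₁ hint₂]
    have key : ‖∫ y in Ω, (K x y * deriv ρ (w₁ x s - w₁ y s)
        - K x y * deriv ρ (w₂ x s - w₂ y s))‖ ≤ ∫ y in Ω, (L' * (2 * b)) * K x y := by
      apply norm_integral_le_of_norm_le ((hKint x hx).const_mul _)
      rw [ae_restrict_iff' hΩmeas]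
      filter_upwards with y hy
      rw [Real.norm_eq_abs, ← mul_sub, abs_mul, abs_of_nonneg (hKnonneg x y)]
      have harg1 : |w₁ x s - w₁ y s| ≤ 2 * R := by
        have h1 := h1bd x hx; have h2 := h1bd y hy
        calc |w₁ x s - w₁ y s| ≤ |w₁ x s| + |w₁ y s| := abs_sub _ _
        _ ≤ 2 * R := by linarith
      have harg2 : |w₂ x s - w₂ y s| ≤ 2 * R := by
        have h1 := h2bd x hx; have h2 := h2bd y hy
        calc |w₂ x s - w₂ y s| ≤ |w₂ x s| + |w₂ y s| := abs_sub _ _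
        _ ≤ 2 * R := by linarith
      have hd : |deriv ρ (w₁ x s - w₁ y s) - deriv ρ (w₂ x s - w₂ y s)|
          ≤ L' * (2 * b) := by
        calc |deriv ρ (w₁ x s - w₁ y s) - deriv ρ (w₂ x s - w₂ y s)|
            ≤ L' * |(w₁ x s - w₁ y s) - (w₂ x s - w₂ y s)| := hlip _ _ harg1 harg2
        _ ≤ L' * (2 * b) := by
            apply mul_le_mul_of_nonneg_left _ hL'0
            have e1 := hb x hx; have e2 := hb y hy
            calc |(w₁ x s - w₁ y s) - (w₂ x s - w₂ y s)|
                = |(w₁ x s - w₂ x s) - (w₁ y s - w₂ y s)| := by ring_nf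
            _ ≤ |w₁ x s - w₂ x s| + |w₁ y s - w₂ y s| := abs_sub _ _
            _ ≤ 2 * b := by linarith
      calc K x y * |deriv ρ (w₁ x s - w₁ y s) - deriv ρ (w₂ x s - w₂ y s)|
          ≤ K x y * (L' * (2 * b)) := mul_le_mul_of_nonneg_left hd (hKnonneg x y)
      _ = L' * (2 * b) * K x y := by ring
    rw [Real.norm_eq_abs] at key
    rw [integral_const_mul] at key
    calc |∫ y in Ω, (K x y * deriv ρ (w₁ x s - w₁ y s)
        - K x y * deriv ρ (w₂ x s - w₂ y s))| ≤ L' * (2 * b) * ∫ y in Ω, K x y := key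
    _ ≤ L' * (2 * b) * D := by
        apply mul_le_mul_of_nonneg_left (hD x hx) (by positivity)
    _ = 2 * D * L' * b := by ring
  have hfdiff : |f (w₁ x s) x s - f (w₂ x s) x s| ≤ L_f * b := by
    calc |f (w₁ x s) x s - f (w₂ x s) x s| ≤ L_f * |w₁ x s - w₂ x s| :=
      hflip _ _ x hx s hs0
    _ ≤ L_f * b := mul_le_mul_of_nonneg_left (hb x hx) hL_f
  calc |((∫ y in Ω, K x y * deriv ρ (w₁ x s - w₁ y s)) + f (w₁ x s) x s)
     - ((∫ y in Ω, K x y * deriv ρ (w₂ x s - w₂ y s)) + f (w₂ x s) x s)|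
      = |((∫ y in Ω, K x y * deriv ρ (w₁ x s - w₁ y s))
        - ∫ y in Ω, K x y * deriv ρ (w₂ x s - w₂ y s))
        + (f (w₁ x s) x s - f (w₂ x s) x s)| := by ring_nf
  _ ≤ |(∫ y in Ω, K x y * deriv ρ (w₁ x s - w₁ y s))
        - ∫ y in Ω, K x y * deriv ρ (w₂ x s - w₂ y s)|
        + |f (w₁ x s) x s - f (w₂ x s) x s| := abs_add_le _ _
  _ ≤ 2 * D * L' * b + L_f * b := add_le_add hIdiff hfdiff
  _ = (2 * D * L' + L_f) * b := by ring

open scoped Classical in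
noncomputable def st19_ext {n : ℕ} {Ω : Set (EuclideanSpace ℝ (Fin n))} {T : ℝ}
    (u : BoundedContinuousFunction (↥Ω × ↥(Icc (0:ℝ) T)) ℝ)
    (x : EuclideanSpace ℝ (Fin n)) (t : ℝ) : ℝ :=
  if h : x ∈ Ω ∧ t ∈ Icc (0:ℝ) T then u (⟨x, h.1⟩, ⟨t, h.2⟩) else 0

lemma st19_ext_eq {n : ℕ} {Ω : Set (EuclideanSpace ℝ (Fin n))} {T : ℝ}
    (u : BoundedContinuousFunction (↥Ω × ↥(Icc (0:ℝ) T)) ℝ)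
    {x : EuclideanSpace ℝ (Fin n)} (hx : x ∈ Ω) {t : ℝ} (ht : t ∈ Icc (0:ℝ) T) :
    st19_ext u x t = u (⟨x, hx⟩, ⟨t, ht⟩) := by
  rw [st19_ext, dif_pos ⟨hx, ht⟩]

lemma st19_ext_bd {n : ℕ} {Ω : Set (EuclideanSpace ℝ (Fin n))} {T : ℝ}
    (u : BoundedContinuousFunction (↥Ω × ↥(Icc (0:ℝ) T)) ℝ)
    {x : EuclideanSpace ℝ (Fin n)} (hx : x ∈ Ω) {t : ℝ} (ht : t ∈ Icc (0:ℝ) T) :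
    |st19_ext u x t| ≤ ‖u‖ := by
  rw [st19_ext_eq u hx ht, ← Real.norm_eq_abs]
  exact u.norm_coe_le_norm _

lemma st19_ext_cont {n : ℕ} {Ω : Set (EuclideanSpace ℝ (Fin n))} {T : ℝ}
    (u : BoundedContinuousFunction (↥Ω × ↥(Icc (0:ℝ) T)) ℝ) :
    ContinuousOn (fun p : (EuclideanSpace ℝ (Fin n)) × ℝ => st19_ext u p.1 p.2)
      (Ω ×ˢ Icc (0:ℝ) T) := by
  rw [continuousOn_iff_continuous_restrict]
  have heq : (Ω ×ˢ Icc (0:ℝ) T).domRestrict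
      (fun p : (EuclideanSpace ℝ (Fin n)) × ℝ => st19_ext u p.1 p.2)
      = fun q => u (⟨q.val.1, q.property.1⟩, ⟨q.val.2, q.property.2⟩) := by
    funext q
    exact st19_ext_eq u q.property.1 q.property.2
  rw [heq]
  apply u.continuous.comp
  apply Continuous.prodMk
  · exact Continuous.subtype_mk (continuous_fst.comp continuous_subtype_val) _
  · exact Continuous.subtype_mk (continuous_snd.comp continuous_subtype_val) _

lemma st19_derivBd {ρ : ℝ → ℝ} {r L : ℝ} (hL : 0 ≤ L) (hr : 0 ≤ r)
    (hlip : ∀ a b : ℝ, |a| ≤ r → |b| ≤ r → |deriv ρ a - deriv ρ b| ≤ L * |a - b|) :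
    ∀ a : ℝ, |a| ≤ r → |deriv ρ a| ≤ |deriv ρ 0| + L * r := by
  intro a ha
  have h0 : |(0:ℝ)| ≤ r := by simpa using hr
  have hd := hlip a 0 ha h0
  rw [sub_zero] at hd
  have h1 : |deriv ρ a| ≤ |deriv ρ a - deriv ρ 0| + |deriv ρ 0| := by
    calc |deriv ρ a| = |(deriv ρ a - deriv ρ 0) + deriv ρ 0| := by ring_nf
    _ ≤ |deriv ρ a - deriv ρ 0| + |deriv ρ 0| := abs_add_le _ _
  nlinarith [mul_le_mul_of_nonneg_left ha hL]
/-- Short time existence and uniqueness for the inhomogeneous problem: for an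
admissible kernel `K`, a recognition function `ρ`, a bounded continuous initial datum `u₀`,
and an inhomogeneity `f : ℝ × Ω × [0,∞) → ℝ` which is continuous, bounded, and Lipschitz in
its first argument uniformly in the others, there exists `T > 0` such that there is exactly
one bounded continuous `u : Ω × [0,T] → ℝ` with
`u(x,t) = u₀(x) + ∫₀ᵗ (g[u](x,s) + f(u(x,s),x,s)) ds` on `Ω × [0,T]`. -/
theorem statement19
    (n : ℕ) (Ω : Set (EuclideanSpace ℝ (Fin n)))
    (hΩne : Ω.Nonempty) (hΩmeas : MeasurableSet Ω)
    -- `K` is an admissible kernel: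
    (K : EuclideanSpace ℝ (Fin n) → EuclideanSpace ℝ (Fin n) → ℝ)
    (hKnonneg : ∀ x y, 0 ≤ K x y)
    (hKmeas : Measurable (Function.uncurry K))
    (hKint : ∀ x ∈ Ω, IntegrableOn (K x) Ω)
    (hKcont : ∀ x ∈ Ω, ∀ ε > (0:ℝ), ∃ δ > (0:ℝ), ∀ x' ∈ Ω, dist x' x < δ →
        (∫ y in Ω, |K x' y - K x y|) < ε)
    (D : ℝ) (hD : ∀ x ∈ Ω, (∫ y in Ω, K x y) ≤ D)
    -- `ρ` is a recognition function:
    (ρ : ℝ → ℝ) (hρ : Differentiable ℝ ρ)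
    (hρ'lip : ∀ R : ℝ, 0 < R → ∃ L : ℝ, ∀ a b : ℝ, |a| ≤ R → |b| ≤ R →
        |deriv ρ a - deriv ρ b| ≤ L * |a - b|)
    -- `u₀` bounded and continuous on `Ω`:
    (u₀ : EuclideanSpace ℝ (Fin n) → ℝ)
    (hu₀cont : ContinuousOn u₀ Ω) (M₀ : ℝ) (hu₀bd : ∀ x ∈ Ω, |u₀ x| ≤ M₀)
    -- `f` continuous, bounded, and uniformly Lipschitz in its first argument:
    (f : ℝ → EuclideanSpace ℝ (Fin n) → ℝ → ℝ)
    (hfcont : ContinuousOn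
        (fun p : ℝ × EuclideanSpace ℝ (Fin n) × ℝ => f p.1 p.2.1 p.2.2)
        (univ ×ˢ Ω ×ˢ Ici 0))
    (Bf : ℝ) (hfbd : ∀ c : ℝ, ∀ x ∈ Ω, ∀ t : ℝ, 0 ≤ t → |f c x t| ≤ Bf)
    (L_f : ℝ) (hL_f : 0 ≤ L_f)
    (hflip : ∀ c c' : ℝ, ∀ x ∈ Ω, ∀ t : ℝ, 0 ≤ t → |f c x t - f c' x t| ≤ L_f * |c - c'|) :
    ∃ T > (0:ℝ), ∃ u : EuclideanSpace ℝ (Fin n) → ℝ → ℝ,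
      (ContinuousOn (fun p : EuclideanSpace ℝ (Fin n) × ℝ => u p.1 p.2) (Ω ×ˢ Icc 0 T) ∧
       (∃ M : ℝ, ∀ x ∈ Ω, ∀ t ∈ Icc (0:ℝ) T, |u x t| ≤ M) ∧
       (∀ x ∈ Ω, ∀ t ∈ Icc (0:ℝ) T,
          u x t = u₀ x + ∫ s in (0:ℝ)..t,
            ((∫ y in Ω, K x y * deriv ρ (u x s - u y s)) + f (u x s) x s))) ∧
      (∀ v : EuclideanSpace ℝ (Fin n) → ℝ → ℝ,
        ContinuousOn (fun p : EuclideanSpace ℝ (Fin n) × ℝ => v p.1 p.2) (Ω ×ˢ Icc 0 T) →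
        (∃ M : ℝ, ∀ x ∈ Ω, ∀ t ∈ Icc (0:ℝ) T, |v x t| ≤ M) →
        (∀ x ∈ Ω, ∀ t ∈ Icc (0:ℝ) T,
          v x t = u₀ x + ∫ s in (0:ℝ)..t,
            ((∫ y in Ω, K x y * deriv ρ (v x s - v y s)) + f (v x s) x s)) →
        ∀ x ∈ Ω, ∀ t ∈ Icc (0:ℝ) T, v x t = u x t) := by
  classical
  obtain ⟨x₀, hx₀⟩ := hΩne
  have hM₀0 : 0 ≤ M₀ := le_trans (abs_nonneg _) (hu₀bd x₀ hx₀)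
  have hBf0 : 0 ≤ Bf := le_trans (abs_nonneg _) (hfbd 0 x₀ hx₀ 0 le_rfl)
  have hD0 : 0 ≤ D := le_trans (integral_nonneg fun y => hKnonneg x₀ y) (hD x₀ hx₀)
  have hρ'cont : Continuous (deriv ρ) := st19_contDeriv ρ hρ'lip
  set M : ℝ := M₀ + 1 with hMdef
  have hM0 : 0 < M := by simp only [hMdef]; linarith
  obtain ⟨L₀, hL₀⟩ := hρ'lip (2 * M) (by linarith)
  set L : ℝ := max L₀ 0 with hLdef
  have hL0 : 0 ≤ L := le_max_right _ _
  have hLlip : ∀ a b : ℝ, |a| ≤ 2 * M → |b| ≤ 2 * M →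
      |deriv ρ a - deriv ρ b| ≤ L * |a - b| := fun a b ha hb =>
    le_trans (hL₀ a b ha hb) (mul_le_mul_of_nonneg_right (le_max_left _ _) (abs_nonneg _))
  set C : ℝ := |deriv ρ 0| + L * (2 * M) with hCdef
  have hC0 : 0 ≤ C := by positivity
  have hCbd : ∀ a : ℝ, |a| ≤ 2 * M → |deriv ρ a| ≤ C :=
    st19_derivBd hL0 (by linarith) hLlip
  set B : ℝ := C * D + Bf with hBdef
  have hB0 : 0 ≤ B := by positivity
  set κ₀ : ℝ := 2 * D * L + L_f with hκ₀def
  have hκ₀0 : 0 ≤ κ₀ := by positivity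
  set T : ℝ := 1 / (B + κ₀ + 1) with hTdef
  have hTpos : 0 < T := by rw [hTdef]; positivity
  have hT0 : 0 ≤ T := hTpos.le
  have hTB : T * B ≤ 1 := by
    rw [hTdef, div_mul_eq_mul_div, one_mul, div_le_one (by positivity)]; linarith
  have hTκ : T * κ₀ < 1 := by
    rw [hTdef, div_mul_eq_mul_div, one_mul, div_lt_one (by positivity)]; linarith
  refine ⟨T, hTpos, ?_⟩
  have h0T : (0:ℝ) ∈ Icc (0:ℝ) T := ⟨le_refl _, hT0⟩
  -- bounds for extensions of elements of the ball
  have hext : ∀ u : BoundedContinuousFunction (↥Ω × ↥(Icc (0:ℝ) T)) ℝ, ‖u‖ ≤ M →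
      ∀ x ∈ Ω, ∀ t ∈ Icc (0:ℝ) T, |st19_ext u x t| ≤ M :=
    fun u hu x hx t ht => (st19_ext_bd u hx ht).trans hu
  have hGcont : ∀ u : BoundedContinuousFunction (↥Ω × ↥(Icc (0:ℝ) T)) ℝ, ‖u‖ ≤ M →
      ContinuousOn (fun p : (EuclideanSpace ℝ (Fin n)) × ℝ =>
        (∫ y in Ω, K p.1 y * deriv ρ (st19_ext u p.1 p.2 - st19_ext u y p.2))
          + f (st19_ext u p.1 p.2) p.1 p.2) (Ω ×ˢ Icc 0 T) :=
    fun u hu => st19_G_cont hΩmeas hKnonneg hKmeas hKint hKcont hρ'cont hfcont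
      (st19_ext_cont u) (hext u hu) hCbd hC0
  have hGbd : ∀ u : BoundedContinuousFunction (↥Ω × ↥(Icc (0:ℝ) T)) ℝ, ‖u‖ ≤ M →
      ∀ x ∈ Ω, ∀ s ∈ Icc (0:ℝ) T,
      |(∫ y in Ω, K x y * deriv ρ (st19_ext u x s - st19_ext u y s))
        + f (st19_ext u x s) x s| ≤ B := by
    intro u hu x hx s hs
    have h1 := st19_int_bound hΩmeas hKnonneg hKmeas hKint hD hρ'cont
      (st19_ext_cont u) (hext u hu) hCbd hC0 hx hs
    have h2 := hfbd (st19_ext u x s) x hx s hs.1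
    calc |(∫ y in Ω, K x y * deriv ρ (st19_ext u x s - st19_ext u y s))
        + f (st19_ext u x s) x s|
        ≤ |∫ y in Ω, K x y * deriv ρ (st19_ext u x s - st19_ext u y s)|
          + |f (st19_ext u x s) x s| := abs_add_le _ _
    _ ≤ C * D + Bf := add_le_add h1 h2
  have hPhiCont : ∀ u : BoundedContinuousFunction (↥Ω × ↥(Icc (0:ℝ) T)) ℝ, ‖u‖ ≤ M →
      ContinuousOn (fun p : (EuclideanSpace ℝ (Fin n)) × ℝ =>
        u₀ p.1 + ∫ s in (0:ℝ)..p.2,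
          ((∫ y in Ω, K p.1 y * deriv ρ (st19_ext u p.1 s - st19_ext u y s))
            + f (st19_ext u p.1 s) p.1 s)) (Ω ×ˢ Icc 0 T) := by
    intro u hu
    exact st19_Phi_cont (G := fun x s =>
        (∫ y in Ω, K x y * deriv ρ (st19_ext u x s - st19_ext u y s))
          + f (st19_ext u x s) x s)
      u₀ hu₀cont hT0 (hGcont u hu) (hGbd u hu)
  have hIb : ∀ u : BoundedContinuousFunction (↥Ω × ↥(Icc (0:ℝ) T)) ℝ, ‖u‖ ≤ M →
      ∀ x ∈ Ω, ∀ t ∈ Icc (0:ℝ) T,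
      |∫ s in (0:ℝ)..t, ((∫ y in Ω, K x y * deriv ρ (st19_ext u x s - st19_ext u y s))
        + f (st19_ext u x s) x s)| ≤ B * T := by
    intro u hu x hx t ht
    have key := intervalIntegral.norm_integral_le_of_norm_le_const (C := B) (a := (0:ℝ))
      (b := t) (f := fun s => (∫ y in Ω, K x y * deriv ρ (st19_ext u x s - st19_ext u y s))
        + f (st19_ext u x s) x s) ?_
    · rw [Real.norm_eq_abs] at key
      calc |∫ s in (0:ℝ)..t, ((∫ y in Ω, K x y * deriv ρ (st19_ext u x s - st19_ext u y s))
          + f (st19_ext u x s) x s)| ≤ B * |t - 0| := key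
      _ = B * t := by rw [sub_zero, abs_of_nonneg ht.1]
      _ ≤ B * T := mul_le_mul_of_nonneg_left ht.2 hB0
    · intro s hs
      rw [uIoc_of_le ht.1] at hs
      rw [Real.norm_eq_abs]
      exact hGbd u hu x hx s ⟨hs.1.le, hs.2.trans ht.2⟩
  have hPhiBd : ∀ u : BoundedContinuousFunction (↥Ω × ↥(Icc (0:ℝ) T)) ℝ, ‖u‖ ≤ M →
      ∀ x ∈ Ω, ∀ t ∈ Icc (0:ℝ) T,
      |u₀ x + ∫ s in (0:ℝ)..t, ((∫ y in Ω, K x y * deriv ρ (st19_ext u x s - st19_ext u y s))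
        + f (st19_ext u x s) x s)| ≤ M := by
    intro u hu x hx t ht
    have h1 := hu₀bd x hx
    have h2 := hIb u hu x hx t ht
    have h3 : B * T ≤ 1 := by rw [mul_comm]; exact hTB
    calc |u₀ x + ∫ s in (0:ℝ)..t,
        ((∫ y in Ω, K x y * deriv ρ (st19_ext u x s - st19_ext u y s))
          + f (st19_ext u x s) x s)|
        ≤ |u₀ x| + |∫ s in (0:ℝ)..t,
          ((∫ y in Ω, K x y * deriv ρ (st19_ext u x s - st19_ext u y s))
            + f (st19_ext u x s) x s)| := abs_add_le _ _
    _ ≤ M₀ + 1 := by linarith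
  -- the Picard operator on the closed ball
  set Φ : {u : BoundedContinuousFunction (↥Ω × ↥(Icc (0:ℝ) T)) ℝ // ‖u‖ ≤ M} →
      {u : BoundedContinuousFunction (↥Ω × ↥(Icc (0:ℝ) T)) ℝ // ‖u‖ ≤ M} := fun u =>
    ⟨BoundedContinuousFunction.ofNormedAddCommGroup
      (fun q : ↥Ω × ↥(Icc (0:ℝ) T) =>
        u₀ (q.1 : EuclideanSpace ℝ (Fin n)) + ∫ s in (0:ℝ)..(q.2 : ℝ),
          ((∫ y in Ω, K (q.1 : EuclideanSpace ℝ (Fin n)) y *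
              deriv ρ (st19_ext u.1 (q.1 : EuclideanSpace ℝ (Fin n)) s - st19_ext u.1 y s))
            + f (st19_ext u.1 (q.1 : EuclideanSpace ℝ (Fin n)) s)
              (q.1 : EuclideanSpace ℝ (Fin n)) s))
      ((hPhiCont u.1 u.2).comp_continuous
        ((continuous_subtype_val.comp continuous_fst).prodMk
          (continuous_subtype_val.comp continuous_snd))
        (fun q => ⟨q.1.2, q.2.2⟩))
      M
      (fun q => by
        rw [Real.norm_eq_abs]
        exact hPhiBd u.1 u.2 _ q.1.2 _ q.2.2),
      BoundedContinuousFunction.norm_ofNormedAddCommGroup_le _ hM0.le _⟩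
    with hΦdef
  have hΦeval : ∀ (u : {u : BoundedContinuousFunction (↥Ω × ↥(Icc (0:ℝ) T)) ℝ // ‖u‖ ≤ M})
      (q : ↥Ω × ↥(Icc (0:ℝ) T)), (Φ u).1 q =
        u₀ (q.1 : EuclideanSpace ℝ (Fin n)) + ∫ s in (0:ℝ)..(q.2 : ℝ),
          ((∫ y in Ω, K (q.1 : EuclideanSpace ℝ (Fin n)) y *
              deriv ρ (st19_ext u.1 (q.1 : EuclideanSpace ℝ (Fin n)) s - st19_ext u.1 y s))
            + f (st19_ext u.1 (q.1 : EuclideanSpace ℝ (Fin n)) s)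
              (q.1 : EuclideanSpace ℝ (Fin n)) s) := by
    intro u q
    rw [hΦdef]
    rfl
  haveI hne : Nonempty {u : BoundedContinuousFunction (↥Ω × ↥(Icc (0:ℝ) T)) ℝ // ‖u‖ ≤ M} :=
    ⟨⟨0, by simp [hM0.le]⟩⟩
  haveI hcs : CompleteSpace {u : BoundedContinuousFunction (↥Ω × ↥(Icc (0:ℝ) T)) ℝ // ‖u‖ ≤ M} := by
    have hclosed : IsClosed {u : BoundedContinuousFunction (↥Ω × ↥(Icc (0:ℝ) T)) ℝ | ‖u‖ ≤ M} :=
      isClosed_le continuous_norm continuous_const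
    exact hclosed.completeSpace_coe
  -- interval integrability of the slices of G
  have hGii : ∀ u : BoundedContinuousFunction (↥Ω × ↥(Icc (0:ℝ) T)) ℝ, ‖u‖ ≤ M →
      ∀ x ∈ Ω, ∀ t ∈ Icc (0:ℝ) T, IntervalIntegrable (fun s =>
        (∫ y in Ω, K x y * deriv ρ (st19_ext u x s - st19_ext u y s))
          + f (st19_ext u x s) x s) volume 0 t := by
    intro u hu x hx t ht
    have hsl : ContinuousOn ((fun p : (EuclideanSpace ℝ (Fin n)) × ℝ =>
        (∫ y in Ω, K p.1 y * deriv ρ (st19_ext u p.1 p.2 - st19_ext u y p.2))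
          + f (st19_ext u p.1 p.2) p.1 p.2) ∘ (fun s : ℝ => ((x, s) : (EuclideanSpace ℝ (Fin n)) × ℝ)))
        (Icc (0:ℝ) T) :=
      ContinuousOn.comp (hGcont u hu)
        ((continuous_const.prodMk continuous_id).continuousOn) (fun s hs => ⟨hx, hs⟩)
    have hsub : uIcc (0:ℝ) t ⊆ Icc (0:ℝ) T := by
      rw [uIcc_of_le ht.1]
      exact Icc_subset_Icc_right ht.2
    exact (hsl.mono hsub).intervalIntegrable
  -- contraction
  set κ : NNReal := Real.toNNReal (T * κ₀) with hκdef
  have hκcoe : (κ : ℝ) = T * κ₀ := Real.coe_toNNReal _ (by positivity)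
  have hcontr : ContractingWith κ Φ := by
    constructor
    · rw [hκdef, ← NNReal.coe_lt_coe, Real.coe_toNNReal _ (by positivity), NNReal.coe_one]
      exact hTκ
    · apply LipschitzWith.of_dist_le_mul
      intro u v
      rw [hκcoe, Subtype.dist_eq]
      have hd0 : (0:ℝ) ≤ T * κ₀ * dist u.1 v.1 :=
        mul_nonneg (mul_nonneg hT0 hκ₀0) dist_nonneg
      apply (BoundedContinuousFunction.dist_le hd0).2
      intro q
      rw [hΦeval u q, hΦeval v q, Real.dist_eq]
      have hx : (q.1 : EuclideanSpace ℝ (Fin n)) ∈ Ω := q.1.2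
      have ht : (q.2 : ℝ) ∈ Icc (0:ℝ) T := q.2.2
      have hsub : (u₀ (q.1 : EuclideanSpace ℝ (Fin n)) + ∫ s in (0:ℝ)..(q.2 : ℝ),
            ((∫ y in Ω, K (q.1 : EuclideanSpace ℝ (Fin n)) y *
                deriv ρ (st19_ext u.1 (q.1 : EuclideanSpace ℝ (Fin n)) s - st19_ext u.1 y s))
              + f (st19_ext u.1 (q.1 : EuclideanSpace ℝ (Fin n)) s)
                (q.1 : EuclideanSpace ℝ (Fin n)) s))
          - (u₀ (q.1 : EuclideanSpace ℝ (Fin n)) + ∫ s in (0:ℝ)..(q.2 : ℝ),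
            ((∫ y in Ω, K (q.1 : EuclideanSpace ℝ (Fin n)) y *
                deriv ρ (st19_ext v.1 (q.1 : EuclideanSpace ℝ (Fin n)) s - st19_ext v.1 y s))
              + f (st19_ext v.1 (q.1 : EuclideanSpace ℝ (Fin n)) s)
                (q.1 : EuclideanSpace ℝ (Fin n)) s))
          = ∫ s in (0:ℝ)..(q.2 : ℝ),
            (((∫ y in Ω, K (q.1 : EuclideanSpace ℝ (Fin n)) y *
                deriv ρ (st19_ext u.1 (q.1 : EuclideanSpace ℝ (Fin n)) s - st19_ext u.1 y s))
              + f (st19_ext u.1 (q.1 : EuclideanSpace ℝ (Fin n)) s)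
                (q.1 : EuclideanSpace ℝ (Fin n)) s)
            - ((∫ y in Ω, K (q.1 : EuclideanSpace ℝ (Fin n)) y *
                deriv ρ (st19_ext v.1 (q.1 : EuclideanSpace ℝ (Fin n)) s - st19_ext v.1 y s))
              + f (st19_ext v.1 (q.1 : EuclideanSpace ℝ (Fin n)) s)
                (q.1 : EuclideanSpace ℝ (Fin n)) s)) := by
        rw [intervalIntegral.integral_sub (hGii u.1 u.2 _ hx _ ht) (hGii v.1 v.2 _ hx _ ht)]
        ring
      rw [hsub]
      have key := intervalIntegral.norm_integral_le_of_norm_le_const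
        (C := κ₀ * dist u.1 v.1) (a := (0:ℝ)) (b := (q.2 : ℝ))
        (f := fun s => (((∫ y in Ω, K (q.1 : EuclideanSpace ℝ (Fin n)) y *
                deriv ρ (st19_ext u.1 (q.1 : EuclideanSpace ℝ (Fin n)) s - st19_ext u.1 y s))
              + f (st19_ext u.1 (q.1 : EuclideanSpace ℝ (Fin n)) s)
                (q.1 : EuclideanSpace ℝ (Fin n)) s)
            - ((∫ y in Ω, K (q.1 : EuclideanSpace ℝ (Fin n)) y *
                deriv ρ (st19_ext v.1 (q.1 : EuclideanSpace ℝ (Fin n)) s - st19_ext v.1 y s))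
              + f (st19_ext v.1 (q.1 : EuclideanSpace ℝ (Fin n)) s)
                (q.1 : EuclideanSpace ℝ (Fin n)) s))) ?_
      · rw [Real.norm_eq_abs] at key
        refine le_trans key ?_
        rw [sub_zero, abs_of_nonneg ht.1]
        calc κ₀ * dist u.1 v.1 * (q.2 : ℝ) ≤ κ₀ * dist u.1 v.1 * T :=
          mul_le_mul_of_nonneg_left ht.2 (mul_nonneg hκ₀0 dist_nonneg)
        _ = T * κ₀ * dist u.1 v.1 := by ring
      · intro s hs
        rw [uIoc_of_le ht.1] at hs
        have hs' : s ∈ Icc (0:ℝ) T := ⟨hs.1.le, hs.2.trans ht.2⟩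
        rw [Real.norm_eq_abs, hκ₀def]
        exact st19_G_diff hΩmeas hKnonneg hKint hD hL_f hflip hx hs'.1
          (st19_integrable hΩmeas hKnonneg hKmeas hKint hρ'cont (st19_ext_cont u.1)
            (hext u.1 u.2) hCbd hx hx hs')
          (st19_integrable hΩmeas hKnonneg hKmeas hKint hρ'cont (st19_ext_cont v.1)
            (hext v.1 v.2) hCbd hx hx hs')
          hL0 hLlip (fun z hz => hext u.1 u.2 z hz s hs') (fun z hz => hext v.1 v.2 z hz s hs')
          dist_nonneg
          (fun z hz => by
            rw [st19_ext_eq u.1 hz hs', st19_ext_eq v.1 hz hs', ← Real.dist_eq]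
            exact BoundedContinuousFunction.dist_coe_le_dist _)
  -- fixed point
  set ustar := ContractingWith.fixedPoint Φ hcontr with hustar
  have hfix : Φ ustar = ustar := hcontr.fixedPoint_isFixedPt
  set ufun : EuclideanSpace ℝ (Fin n) → ℝ → ℝ := st19_ext ustar.1 with hufun
  have hueq : ∀ x ∈ Ω, ∀ t ∈ Icc (0:ℝ) T, ufun x t = u₀ x + ∫ s in (0:ℝ)..t,
      ((∫ y in Ω, K x y * deriv ρ (ufun x s - ufun y s)) + f (ufun x s) x s) := by
    intro x hx t ht
    have h1 : ufun x t = ustar.1 (⟨x, hx⟩, ⟨t, ht⟩) := st19_ext_eq _ hx ht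
    rw [h1, ← hfix]
    exact hΦeval ustar (⟨x, hx⟩, ⟨t, ht⟩)
  refine ⟨ufun, ⟨st19_ext_cont ustar.1, ⟨M, fun x hx t ht => hext ustar.1 ustar.2 x hx t ht⟩,
    hueq⟩, ?_⟩
  intro v hvcont hvbd' hveq x hx t ht
  obtain ⟨Mv, hvbd⟩ := hvbd'
  have hMv0 : 0 ≤ Mv := le_trans (abs_nonneg _) (hvbd x₀ hx₀ 0 h0T)
  set R : ℝ := max M Mv with hRdef
  have hMR : M ≤ R := le_max_left _ _
  have hMvR : Mv ≤ R := le_max_right _ _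
  have hR0 : 0 < R := lt_of_lt_of_le hM0 hMR
  obtain ⟨L₂₀, hL₂₀⟩ := hρ'lip (2 * R) (by linarith)
  set L₂ : ℝ := max L₂₀ 0 with hL₂def
  have hL₂0 : 0 ≤ L₂ := le_max_right _ _
  have hlip₂ : ∀ a b : ℝ, |a| ≤ 2 * R → |b| ≤ 2 * R →
      |deriv ρ a - deriv ρ b| ≤ L₂ * |a - b| := fun a b ha hb =>
    le_trans (hL₂₀ a b ha hb) (mul_le_mul_of_nonneg_right (le_max_left _ _) (abs_nonneg _))
  set C₂ : ℝ := |deriv ρ 0| + L₂ * (2 * R) with hC₂def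
  have hC₂bd : ∀ a : ℝ, |a| ≤ 2 * R → |deriv ρ a| ≤ C₂ :=
    st19_derivBd hL₂0 (by linarith) hlip₂
  have hvbdR : ∀ z ∈ Ω, ∀ s ∈ Icc (0:ℝ) T, |v z s| ≤ R :=
    fun z hz s hs => (hvbd z hz s hs).trans hMvR
  have hubdR : ∀ z ∈ Ω, ∀ s ∈ Icc (0:ℝ) T, |ufun z s| ≤ R :=
    fun z hz s hs => (hext ustar.1 ustar.2 z hz s hs).trans hMR
  have hucontR : ContinuousOn (fun p : (EuclideanSpace ℝ (Fin n)) × ℝ => ufun p.1 p.2)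
      (Ω ×ˢ Icc 0 T) := st19_ext_cont ustar.1
  have hGvcont := st19_G_cont hΩmeas hKnonneg hKmeas hKint hKcont hρ'cont hfcont
    hvcont hvbdR hC₂bd (by positivity)
  have hGvii : ∀ z ∈ Ω, ∀ τ ∈ Icc (0:ℝ) T, IntervalIntegrable (fun s =>
      (∫ y in Ω, K z y * deriv ρ (v z s - v y s)) + f (v z s) z s) volume 0 τ := by
    intro z hz τ hτ
    have hsl : ContinuousOn ((fun p : (EuclideanSpace ℝ (Fin n)) × ℝ =>
        (∫ y in Ω, K p.1 y * deriv ρ (v p.1 p.2 - v y p.2))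
          + f (v p.1 p.2) p.1 p.2) ∘ (fun s : ℝ => ((z, s) : (EuclideanSpace ℝ (Fin n)) × ℝ)))
        (Icc (0:ℝ) T) :=
      ContinuousOn.comp hGvcont
        ((continuous_const.prodMk continuous_id).continuousOn) (fun s hs => ⟨hz, hs⟩)
    have hsub : uIcc (0:ℝ) τ ⊆ Icc (0:ℝ) T := by
      rw [uIcc_of_le hτ.1]
      exact Icc_subset_Icc_right hτ.2
    exact (hsl.mono hsub).intervalIntegrable
  set C' : ℝ := 2 * D * L₂ + L_f with hC'def
  have hC'0 : 0 ≤ C' := by positivity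
  set A : ℝ := M + Mv with hAdef
  have hA0 : 0 ≤ A := by positivity
  have claim : ∀ k : ℕ, ∀ z ∈ Ω, ∀ τ ∈ Icc (0:ℝ) T,
      |v z τ - ufun z τ| ≤ A * (C' * τ)^k / (Nat.factorial k : ℝ) := by
    intro k
    induction k with
    | zero =>
      intro z hz τ hτ
      simp only [pow_zero, Nat.factorial_zero, Nat.cast_one, mul_one, div_one]
      have h1 := hvbd z hz τ hτ
      have h2 := hext ustar.1 ustar.2 z hz τ hτ
      calc |v z τ - ufun z τ| ≤ |v z τ| + |ufun z τ| := abs_sub _ _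
      _ ≤ A := by rw [hAdef]; linarith
    | succ k ih =>
      intro z hz τ hτ
      have hueq' := hueq z hz τ hτ
      have hveq' := hveq z hz τ hτ
      have huii := hGii ustar.1 ustar.2 z hz τ hτ
      have hvii := hGvii z hz τ hτ
      have hdiff : v z τ - ufun z τ = ∫ s in (0:ℝ)..τ,
          (((∫ y in Ω, K z y * deriv ρ (v z s - v y s)) + f (v z s) z s)
            - ((∫ y in Ω, K z y * deriv ρ (ufun z s - ufun y s)) + f (ufun z s) z s)) := by
        rw [hveq', hueq', intervalIntegral.integral_sub hvii huii]
        ring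
      rw [hdiff]
      have habs := intervalIntegral.abs_integral_le_integral_abs (μ := volume) hτ.1
        (f := fun s => (((∫ y in Ω, K z y * deriv ρ (v z s - v y s)) + f (v z s) z s)
          - ((∫ y in Ω, K z y * deriv ρ (ufun z s - ufun y s)) + f (ufun z s) z s)))
      refine le_trans habs ?_
      have hmono : (∫ s in (0:ℝ)..τ,
          |(((∫ y in Ω, K z y * deriv ρ (v z s - v y s)) + f (v z s) z s)
            - ((∫ y in Ω, K z y * deriv ρ (ufun z s - ufun y s)) + f (ufun z s) z s))|)
          ≤ ∫ s in (0:ℝ)..τ, C' * (A * (C' * s)^k / (Nat.factorial k : ℝ)) := by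
        apply intervalIntegral.integral_mono_on hτ.1
        · exact (hvii.sub huii).abs
        · apply Continuous.intervalIntegrable
          fun_prop
        · intro s hs
          have hs' : s ∈ Icc (0:ℝ) T := ⟨hs.1, hs.2.trans hτ.2⟩
          have hb0 : 0 ≤ A * (C' * s)^k / (Nat.factorial k : ℝ) :=
            div_nonneg (mul_nonneg hA0 (pow_nonneg (mul_nonneg hC'0 hs.1) k))
              (Nat.cast_nonneg _)
          rw [hC'def]
          have := st19_G_diff hΩmeas hKnonneg hKint hD hL_f hflip hz hs.1
            (st19_integrable hΩmeas hKnonneg hKmeas hKint hρ'cont hvcont hvbdR hC₂bd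
              hz hz hs')
            (st19_integrable hΩmeas hKnonneg hKmeas hKint hρ'cont hucontR hubdR hC₂bd
              hz hz hs')
            hL₂0 hlip₂ (fun y hy => hvbdR y hy s hs') (fun y hy => hubdR y hy s hs')
            hb0 (fun y hy => ih y hy s hs')
          calc |(((∫ y in Ω, K z y * deriv ρ (v z s - v y s)) + f (v z s) z s)
            - ((∫ y in Ω, K z y * deriv ρ (ufun z s - ufun y s)) + f (ufun z s) z s))|
              ≤ (2 * D * L₂ + L_f) * (A * (C' * s)^k / (Nat.factorial k : ℝ)) := this
          _ = (2 * D * L₂ + L_f) * (A * (C' * s)^k / (Nat.factorial k : ℝ)) := rfl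
      refine le_trans hmono (le_of_eq ?_)
      have hrw : (fun s : ℝ => C' * (A * (C' * s)^k / (Nat.factorial k : ℝ)))
          = fun s : ℝ => (C'^(k+1) * A / (Nat.factorial k : ℝ)) * s^k := by
        funext s
        rw [mul_pow]
        ring
      rw [hrw, intervalIntegral.integral_const_mul, integral_pow, mul_pow,
        Nat.factorial_succ]
      have hkne : ((Nat.factorial k : ℝ)) ≠ 0 := Nat.cast_ne_zero.2 (Nat.factorial_ne_zero k)
      have hkne2 : ((k:ℝ) + 1) ≠ 0 := by positivity
      push_cast
      field_simp
      ring
  have hlim : Filter.Tendsto (fun k : ℕ => A * (C' * t)^k / (Nat.factorial k : ℝ))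
      Filter.atTop (nhds 0) := by
    have h := (FloorSemiring.tendsto_pow_div_factorial_atTop (C' * t)).const_mul A
    rw [mul_zero] at h
    have heq : (fun k : ℕ => A * (C' * t)^k / (Nat.factorial k : ℝ))
        = fun k : ℕ => A * ((C' * t)^k / (Nat.factorial k : ℝ)) := by
      funext k
      rw [mul_div_assoc]
    rw [heq]
    exact h
  have hle : |v x t - ufun x t| ≤ 0 :=
    ge_of_tendsto' hlim (fun k => claim k x hx t ht)
  have := abs_nonpos_iff.1 hle
  exact sub_eq_zero.1 this
end
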